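/- arXiv:2506.16651 — 6 statements merged into one kernel-verified Lean document; each statement's English description precedes it below -/
import Mathlib

section
/- Let m ≥ 1 and d ≥ 0 be integers, let ε ∈ (0,1], and let M be an integer with M ≥ (2^d/ε)·max(2m, 8). Then for every p ∈ [0,1], p · Pr[X ≤ m] ≤ ε/2^d, where X is a Binomial(M, p) random variable (the number of successes among M independent Bernoulli(p) trials). -/
open scoped Classical

/-- Points of the cube `{±1}^n`, encoded as `Fin n → Bool`. -/
abbrev Cube (n : ℕ) := Fin n → Bool

/-- Restrictions `ρ ∈ {±1,⋆}^n`, with `none` playing the role of `⋆`. -/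
abbrev Rst (n : ℕ) := Fin n → Option Bool

/-- Labeled examples. -/
abbrev Lab (n : ℕ) := Cube n × Bool

/-- `x` is consistent with the restriction `ρ`. -/
def Consistent {n : ℕ} (x : Cube n) (ρ : Rst n) : Prop :=
  ∀ i : Fin n, ∀ b : Bool, ρ i = some b → x i = b

/-- The depth (number of non-⋆ coordinates) of a restriction. -/
def rdepth {n : ℕ} (ρ : Rst n) : ℕ :=
  (Finset.univ.filter (fun i => ρ i ≠ none)).card

/-- `IsDT n d T` : `T` is the set of leaf restrictions of a depth-`d` decision tree over `{±1}^n`. -/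
inductive IsDT (n : ℕ) : ℕ → Finset (Rst n) → Prop
  | leaf : IsDT n 0 {fun _ => none}
  | node {d : ℕ} (i : Fin n) {T₀ T₁ : Finset (Rst n)} :
      IsDT n d T₀ → IsDT n d T₁ →
      (∀ ℓ ∈ T₀, ℓ i = none) → (∀ ℓ ∈ T₁, ℓ i = none) →
      IsDT n (d + 1)
        (T₀.image (fun ℓ => Function.update ℓ i (some false)) ∪
         T₁.image (fun ℓ => Function.update ℓ i (some true)))

/-- Empirical error of a hypothesis on a labeled multiset. -/
noncomputable def errS {n : ℕ} (h : Cube n → Bool) (S : Multiset (Lab n)) : ℝ :=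
  ((S.filter (fun p => h p.1 ≠ p.2)).card : ℝ) / (S.card : ℝ)

/-- Empirical error of a partial (`Option Bool`-valued) hypothesis on a labeled multiset;
`⊥ = none` always counts as a misclassification. -/
noncomputable def errSo {n : ℕ} (h : Cube n → Option Bool) (S : Multiset (Lab n)) : ℝ :=
  ((S.filter (fun p => h p.1 ≠ some p.2)).card : ℝ) / (S.card : ℝ)

/-- True error of a hypothesis with respect to a distribution on labeled examples. -/
noncomputable def errD {n : ℕ} (h : Cube n → Bool) (D : Lab n → ℝ) : ℝ :=
  ∑ p : Lab n, if h p.1 ≠ p.2 then D p else 0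

/-- True error of a partial hypothesis with respect to a distribution on labeled examples. -/
noncomputable def errDo {n : ℕ} (h : Cube n → Option Bool) (D : Lab n → ℝ) : ℝ :=
  ∑ p : Lab n, if h p.1 ≠ some p.2 then D p else 0

/-- The multiset of samples of a tuple. -/
def toMS {α : Type*} {m : ℕ} (y : Fin m → α) : Multiset α := ↑(List.ofFn y)

/-- `T ∘ H` : the decision-tree-composed hypothesis. -/
noncomputable def treeHyp {n : ℕ} (T : Finset (Rst n)) (H : Rst n → Cube n → Bool)
    (x : Cube n) : Bool :=
  if h : ∃ ℓ, ℓ ∈ T ∧ Consistent x ℓ then H h.choose x else false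

/-- `P ∘ H` : the subcube-partition-composed hypothesis (`none` = ⊥ off the partition). -/
noncomputable def partHyp {n s : ℕ} (ρ : Fin s → Rst n) (H : Rst n → Cube n → Bool)
    (x : Cube n) : Option Bool :=
  if h : ∃ i, Consistent x (ρ i) then some (H (ρ h.choose) x) else none

/-- `L ∘ H` : the subcube-list-composed hypothesis (first consistent subcube wins). -/
noncomputable def listHyp {n : ℕ} (H : Rst n → Cube n → Bool) :
    List (Rst n) → Cube n → Option Bool
  | [], _ => none
  | π :: L, x => if Consistent x π then some (H π x) else listHyp H L x

/-- Mass of a distribution on the subcube of a restriction. -/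
noncomputable def rmass {n : ℕ} (D : Cube n → ℝ) (ρ : Rst n) : ℝ :=
  ∑ x ∈ Finset.univ.filter (fun x => Consistent x ρ), D x

/-- `D` conditioned on the subcube of the restriction `ρ`. -/
noncomputable def condD {n : ℕ} (D : Cube n → ℝ) (ρ : Rst n) : Cube n → ℝ :=
  fun x => if Consistent x ρ then D x / rmass D ρ else 0

/-- The labeled distribution `D_f` of `(x, f(x))`, `x ~ D`. -/
def labD {n : ℕ} (D : Cube n → ℝ) (f : Cube n → Bool) : Lab n → ℝ :=
  fun p => if p.2 = f p.1 then D p.1 else 0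


private lemma msum0 (M : ℕ) (p q : ℝ) :
    ∑ k ∈ Finset.range (M+1), (M.choose k : ℝ) * p ^ k * q ^ (M - k) = (p + q) ^ M := by
  rw [add_pow]
  exact Finset.sum_congr rfl fun k _ => by ring

private lemma msum1 (M : ℕ) (p q : ℝ) :
    ∑ k ∈ Finset.range (M+1), (k : ℝ) * ((M.choose k : ℝ) * p ^ k * q ^ (M - k))
      = M * p * (p + q) ^ (M - 1) := by
  cases M with
  | zero => simp
  | succ N =>
    rw [Finset.sum_range_succ']
    simp only [Nat.cast_zero, zero_mul, add_zero, Nat.succ_sub_succ, Nat.sub_zero]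
    rw [← msum0 N p q, Finset.mul_sum]
    refine Finset.sum_congr rfl fun j hj => ?_
    have hc : ((N+1 : ℕ) : ℝ) * (N.choose j : ℝ)
        = (((N+1).choose (j+1) : ℕ) : ℝ) * ((j:ℝ)+1) := by
      exact_mod_cast congrArg (Nat.cast (R := ℝ)) (Nat.add_one_mul_choose_eq N j)
    push_cast at hc ⊢
    linear_combination (-(p ^ (j+1)) * q ^ (N - j)) * hc

private lemma msum2 (M : ℕ) (p q : ℝ) :
    ∑ k ∈ Finset.range (M+1), (k : ℝ) * ((k:ℝ) - 1) * ((M.choose k : ℝ) * p ^ k * q ^ (M - k))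
      = M * ((M:ℝ) - 1) * p^2 * (p + q) ^ (M - 2) := by
  cases M with
  | zero => simp
  | succ N =>
    rw [Finset.sum_range_succ']
    simp only [Nat.cast_zero, zero_mul, add_zero, Nat.succ_sub_succ]
    have step : ∀ j ∈ Finset.range (N+1),
        ((j+1 : ℕ) : ℝ) * (((j+1 : ℕ):ℝ) - 1) *
          (((N+1).choose (j+1) : ℝ) * p ^ (j+1) * q ^ (N - j))
        = ((N+1 : ℕ) : ℝ) * p * ((j : ℝ) * ((N.choose j : ℝ) * p ^ j * q ^ (N - j))) := by
      intro j hj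
      have hc : ((N+1 : ℕ) : ℝ) * (N.choose j : ℝ)
          = (((N+1).choose (j+1) : ℕ) : ℝ) * ((j:ℝ)+1) := by
        exact_mod_cast congrArg (Nat.cast (R := ℝ)) (Nat.add_one_mul_choose_eq N j)
      push_cast at hc ⊢
      linear_combination (-(j:ℝ) * p ^ (j+1) * q ^ (N - j)) * hc
    rw [Finset.sum_congr rfl step, ← Finset.mul_sum, msum1 N p q]
    push_cast
    cases N with
    | zero => simp
    | succ K =>
      push_cast
      ring

private lemma var_binom (M : ℕ) (p : ℝ) :
    ∑ k ∈ Finset.range (M+1),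
      ((k:ℝ) - M*p)^2 * ((M.choose k : ℝ) * p ^ k * (1-p) ^ (M - k))
      = M * p * (1 - p) := by
  have hpq : p + (1 - p) = 1 := by ring
  have h0 := msum0 M p (1-p)
  have h1 := msum1 M p (1-p)
  have h2 := msum2 M p (1-p)
  rw [hpq, one_pow] at h0 h1 h2
  have expand : ∀ k ∈ Finset.range (M+1),
      ((k:ℝ) - M*p)^2 * ((M.choose k : ℝ) * p ^ k * (1-p) ^ (M - k))
        = (k:ℝ)*((k:ℝ)-1) * ((M.choose k : ℝ) * p ^ k * (1-p) ^ (M - k))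
          + (1 - 2*(M:ℝ)*p) * ((k:ℝ) * ((M.choose k : ℝ) * p ^ k * (1-p) ^ (M - k)))
          + ((M:ℝ)*p)^2 * ((M.choose k : ℝ) * p ^ k * (1-p) ^ (M - k)) := fun k _ => by ring
  rw [Finset.sum_congr rfl expand, Finset.sum_add_distrib, Finset.sum_add_distrib,
    ← Finset.mul_sum, ← Finset.mul_sum, h0, h1, h2]
  ring


set_option maxHeartbeats 1000000 in
/-- the key (weight-inequality): for `M ≥ (2^d/ε)·max(2m,8)` and any `p ∈ [0,1]`,
`p · Pr[Bin(M,p) ≤ m] ≤ ε/2^d`. -/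
theorem binomial_weight_inequality
    (m d M : ℕ) (hm : 1 ≤ m) (ε : ℝ) (hε0 : 0 < ε) (hε1 : ε ≤ 1)
    (hM : ((2 : ℝ) ^ d / ε) * max (2 * (m : ℝ)) 8 ≤ (M : ℝ))
    (p : ℝ) (hp0 : 0 ≤ p) (hp1 : p ≤ 1) :
    p * (∑ k ∈ Finset.range (m + 1),
        (M.choose k : ℝ) * p ^ k * (1 - p) ^ (M - k)) ≤ ε / 2 ^ d := by
  have h2d : (0:ℝ) < 2 ^ d := by positivity
  set t : ℝ := ε / 2 ^ d with ht_def
  have ht0 : 0 < t := by positivity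
  have ht1 : t ≤ 1 := by
    rw [ht_def, div_le_one h2d]
    calc ε ≤ 1 := hε1
    _ ≤ 2 ^ d := one_le_pow₀ (by norm_num)
  have hinv : t * ((2:ℝ)^d/ε) = 1 := by
    rw [ht_def]; field_simp
  have hmax : max (2*(m:ℝ)) 8 ≤ t * (M:ℝ) := by
    calc max (2*(m:ℝ)) 8 = (t * ((2:ℝ)^d/ε)) * max (2*(m:ℝ)) 8 := by rw [hinv, one_mul]
    _ = t * (((2:ℝ)^d/ε) * max (2*(m:ℝ)) 8) := by ring
    _ ≤ t * M := mul_le_mul_of_nonneg_left hM ht0.le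
  have h2m : 2*(m:ℝ) ≤ t*M := le_trans (le_max_left _ _) hmax
  have h8 : (8:ℝ) ≤ t*M := le_trans (le_max_right _ _) hmax
  have hMnn : (0:ℝ) ≤ M := Nat.cast_nonneg M
  have htMM : t*M ≤ M := by nlinarith
  have hq0 : (0:ℝ) ≤ 1 - p := by linarith
  set S : ℝ := ∑ k ∈ Finset.range (m + 1),
      (M.choose k : ℝ) * p ^ k * (1 - p) ^ (M - k) with hS_def
  have hBnn : ∀ k, (0:ℝ) ≤ (M.choose k : ℝ) * p ^ k * (1 - p) ^ (M - k) := fun k => by positivity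
  have hS0 : 0 ≤ S := Finset.sum_nonneg fun k _ => hBnn k
  have hmM : m ≤ M := by
    have : (m:ℝ) ≤ (M:ℝ) := by linarith
    exact_mod_cast this
  have hsub : Finset.range (m+1) ⊆ Finset.range (M+1) :=
    Finset.range_subset_range.2 (by omega)
  rcases le_or_gt p t with hpt | hpt
  · -- easy case: p ≤ t, and S ≤ 1
    have hS1 : S ≤ 1 := by
      rw [hS_def]
      calc ∑ k ∈ Finset.range (m + 1), (M.choose k : ℝ) * p ^ k * (1 - p) ^ (M - k)
          ≤ ∑ k ∈ Finset.range (M + 1), (M.choose k : ℝ) * p ^ k * (1 - p) ^ (M - k) :=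
            Finset.sum_le_sum_of_subset_of_nonneg hsub (fun k _ _ => hBnn k)
      _ = (p + (1 - p)) ^ M := msum0 M p (1-p)
      _ = 1 := by norm_num
    calc p * S ≤ t * 1 := mul_le_mul hpt hS1 hS0 ht0.le
    _ = t := mul_one t
  · -- hard case: p > t, use Chebyshev
    have hMp2m : 2*(m:ℝ) ≤ (M:ℝ)*p := by nlinarith
    have hMp8 : (8:ℝ) ≤ (M:ℝ)*p := by nlinarith
    have hMp : (0:ℝ) < (M:ℝ)*p := by linarith
    have hm1 : (1:ℝ) ≤ (m:ℝ) := by exact_mod_cast hm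
    have cheb : ((M:ℝ)*p - m)^2 * S ≤ (M:ℝ)*p*(1-p) := by
      rw [← var_binom M p, hS_def, Finset.mul_sum]
      calc ∑ k ∈ Finset.range (m + 1),
            ((M:ℝ)*p - m)^2 * ((M.choose k : ℝ) * p ^ k * (1 - p) ^ (M - k))
          ≤ ∑ k ∈ Finset.range (m + 1),
            ((k:ℝ) - M*p)^2 * ((M.choose k : ℝ) * p ^ k * (1 - p) ^ (M - k)) := by
            refine Finset.sum_le_sum fun k hk => ?_
            have hkm : (k:ℝ) ≤ m := by
              have := Finset.mem_range.1 hk; exact_mod_cast Nat.lt_succ_iff.1 this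
            have hk0 : (0:ℝ) ≤ (k:ℝ) := Nat.cast_nonneg k
            have hsq : ((M:ℝ)*p - m)^2 ≤ ((k:ℝ) - M*p)^2 := by nlinarith
            exact mul_le_mul_of_nonneg_right hsq (hBnn k)
      _ ≤ ∑ k ∈ Finset.range (M + 1),
            ((k:ℝ) - M*p)^2 * ((M.choose k : ℝ) * p ^ k * (1 - p) ^ (M - k)) :=
            Finset.sum_le_sum_of_subset_of_nonneg hsub
              (fun k _ _ => mul_nonneg (sq_nonneg _) (hBnn k))
    have step1 : ((M:ℝ)*p/2)^2 * S ≤ (M:ℝ)*p := by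
      have ha : 0 ≤ (M:ℝ)*p/2 - m := by linarith
      have hb : 0 ≤ (M:ℝ)*p - m + (M:ℝ)*p/2 := by linarith
      have h1 : ((M:ℝ)*p/2)^2 ≤ ((M:ℝ)*p - m)^2 := by nlinarith [mul_nonneg ha hb]
      calc ((M:ℝ)*p/2)^2 * S ≤ ((M:ℝ)*p - m)^2 * S := mul_le_mul_of_nonneg_right h1 hS0
      _ ≤ (M:ℝ)*p*(1-p) := cheb
      _ ≤ (M:ℝ)*p := by nlinarith [mul_nonneg hMp.le hp0]
    have hSle : (M:ℝ)*p*S ≤ 4 := by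
      have hpos : (0:ℝ) < 4/((M:ℝ)*p) := by positivity
      calc (M:ℝ)*p*S = (4/((M:ℝ)*p)) * (((M:ℝ)*p/2)^2 * S) := by
            field_simp; ring
      _ ≤ (4/((M:ℝ)*p)) * ((M:ℝ)*p) := mul_le_mul_of_nonneg_left step1 hpos.le
      _ = 4 := by field_simp; exact div_self hMp.ne'
    have hMpos : (0:ℝ) < M := by nlinarith [hMp8, hp1, hMnn]
    have hpS : p * S ≤ 4 / M := by
      rw [le_div_iff₀ hMpos]
      calc p * S * M = (M:ℝ)*p*S := by ring
      _ ≤ 4 := hSle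
    calc p * S ≤ 4 / M := hpS
    _ ≤ t := by rw [div_le_iff₀ hMpos]; linarith
end

section
/- Let n ≥ 1, 0 ≤ d ≤ n, and let S ⊆ {±1}^n with |S| = 2^{n−1}. Suppose that for every restriction ℓ of depth at most d, (1/3)·2^{n−depth(ℓ)} ≤ |{x ∈ S : x consistent with ℓ}| ≤ (2/3)·2^{n−depth(ℓ)}. Then for every decision tree T of depth at most d and every probability distribution D' on {±1}^n whose probability mass function is constant on each leaf of T (i.e., D'(x) = D'(x') whenever x and x' are consistent with the same leaf ℓ ∈ T), the total variation distance between the uniform distribution on S and D' is at least 1/3. -/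
open scoped Classical

lemma consistent_update {n : ℕ} (ℓ : Rst n) (i : Fin n) (b : Bool)
    (h : ℓ i = none) (x : Cube n) :
    Consistent x (Function.update ℓ i (some b)) ↔ Consistent x ℓ ∧ x i = b := by
  constructor
  · intro hc
    refine ⟨fun j c hj => ?_, hc i b (by simp)⟩
    by_cases hji : j = i
    · subst hji; rw [h] at hj; cases hj
    · exact hc j c (by simpa [Function.update_of_ne hji] using hj)
  · rintro ⟨hc, hb⟩ j c hj
    by_cases hji : j = i
    · subst hji; simp at hj; subst hj; exact hb
    · exact hc j c (by simpa [Function.update_of_ne hji] using hj)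

lemma update_injOn {n : ℕ} (i : Fin n) (b : Bool) {T : Finset (Rst n)}
    (e : ∀ ℓ ∈ T, ℓ i = none) :
    ∀ ℓ ∈ T, ∀ ℓ' ∈ T, Function.update ℓ i (some b) = Function.update ℓ' i (some b) → ℓ = ℓ' := by
  intro ℓ hℓ ℓ' hℓ' hE
  funext j
  by_cases hji : j = i
  · subst hji; rw [e ℓ hℓ, e ℓ' hℓ']
  · have := congrFun hE j
    simpa [Function.update_of_ne hji] using this

lemma dt_partition_sum {n d : ℕ} {T : Finset (Rst n)} (h : IsDT n d T) (g : Cube n → ℝ) :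
    ∑ ℓ ∈ T, ∑ x ∈ Finset.univ.filter (fun x => Consistent x ℓ), g x = ∑ x : Cube n, g x := by
  induction h generalizing g with
  | leaf => simp [Consistent]
  | @node d i T₀ T₁ h0 h1 e0 e1 ih0 ih1 =>
    have hdisj : Disjoint (T₀.image (fun ℓ => Function.update ℓ i (some false)))
        (T₁.image (fun ℓ => Function.update ℓ i (some true))) := by
      rw [Finset.disjoint_left]
      rintro a ha hb
      simp only [Finset.mem_image] at ha hb
      obtain ⟨ℓ₀, -, rfl⟩ := ha
      obtain ⟨ℓ₁, -, hb⟩ := hb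
      have := congrFun hb i
      simp at this
    rw [Finset.sum_union hdisj, Finset.sum_image (update_injOn i false e0),
        Finset.sum_image (update_injOn i true e1)]
    have key : ∀ (b : Bool) (ℓ : Rst n), ℓ i = none →
        ∑ x ∈ Finset.univ.filter (fun x => Consistent x (Function.update ℓ i (some b))), g x
        = ∑ x ∈ Finset.univ.filter (fun x => Consistent x ℓ),
            (if x i = b then g x else 0) := by
      intro b ℓ hz
      rw [Finset.sum_filter, Finset.sum_filter]
      refine Finset.sum_congr rfl fun x _ => ?_
      by_cases hc : Consistent x ℓ
      · by_cases hb : x i = b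
        · simp [consistent_update ℓ i b hz, hc, hb]
        · simp [consistent_update ℓ i b hz, hc, hb]
      · simp [consistent_update ℓ i b hz, hc]
    have h0' : ∑ ℓ ∈ T₀,
        ∑ x ∈ Finset.univ.filter (fun x => Consistent x (Function.update ℓ i (some false))), g x
        = ∑ x : Cube n, (if x i = false then g x else 0) := by
      rw [← ih0 (fun x => if x i = false then g x else 0)]
      exact Finset.sum_congr rfl fun ℓ hℓ => key false ℓ (e0 ℓ hℓ)
    have h1' : ∑ ℓ ∈ T₁,
        ∑ x ∈ Finset.univ.filter (fun x => Consistent x (Function.update ℓ i (some true))), g x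
        = ∑ x : Cube n, (if x i = true then g x else 0) := by
      rw [← ih1 (fun x => if x i = true then g x else 0)]
      exact Finset.sum_congr rfl fun ℓ hℓ => key true ℓ (e1 ℓ hℓ)
    rw [h0', h1', ← Finset.sum_add_distrib]
    refine Finset.sum_congr rfl fun x _ => ?_
    cases hx : x i <;> simp [hx]

lemma rdepth_update {n : ℕ} (ℓ : Rst n) (i : Fin n) (b : Bool) (h : ℓ i = none) :
    rdepth (Function.update ℓ i (some b)) = rdepth ℓ + 1 := by
  unfold rdepth
  have hset : Finset.univ.filter (fun j => Function.update ℓ i (some b) j ≠ none)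
      = insert i (Finset.univ.filter (fun j => ℓ j ≠ none)) := by
    ext j
    by_cases hji : j = i
    · subst hji; simp
    · simp [Function.update_of_ne hji, hji]
  rw [hset, Finset.card_insert_of_notMem (by simp [h])]

lemma dt_rdepth {n d : ℕ} {T : Finset (Rst n)} (h : IsDT n d T) :
    ∀ ℓ ∈ T, rdepth ℓ = d := by
  induction h with
  | leaf => intro ℓ hℓ; simp at hℓ; subst hℓ; simp [rdepth]
  | @node d i T₀ T₁ h0 h1 e0 e1 ih0 ih1 =>
    intro ℓ hℓ
    rw [Finset.mem_union] at hℓ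
    rcases hℓ with hℓ | hℓ
    · obtain ⟨ℓ', hℓ', rfl⟩ := Finset.mem_image.mp hℓ
      rw [rdepth_update _ _ _ (e0 ℓ' hℓ'), ih0 ℓ' hℓ']
    · obtain ⟨ℓ', hℓ', rfl⟩ := Finset.mem_image.mp hℓ
      rw [rdepth_update _ _ _ (e1 ℓ' hℓ'), ih1 ℓ' hℓ']

lemma consistent_update_point {n : ℕ} {x : Cube n} {ℓ : Rst n} (hc : Consistent x ℓ)
    (i : Fin n) (h : ℓ i = none) (c : Bool) : Consistent (Function.update x i c) ℓ := by
  intro j b hj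
  have hji : j ≠ i := fun e => by rw [e, h] at hj; cases hj
  rw [Function.update_of_ne hji]
  exact hc j b hj

lemma card_cons_update {n : ℕ} (ℓ : Rst n) (i : Fin n) (h : ℓ i = none) (b : Bool) :
    2 * (Finset.univ.filter (fun x : Cube n => Consistent x (Function.update ℓ i (some b)))).card
      = (Finset.univ.filter (fun x : Cube n => Consistent x ℓ)).card := by
  have hsplit : (Finset.univ.filter (fun x : Cube n => Consistent x ℓ))
      = (Finset.univ.filter (fun x : Cube n => Consistent x (Function.update ℓ i (some false))))
        ∪ (Finset.univ.filter (fun x : Cube n => Consistent x (Function.update ℓ i (some true)))) := by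
    ext x
    simp only [Finset.mem_union, Finset.mem_filter, Finset.mem_univ, true_and,
      consistent_update ℓ i _ h]
    cases hx : x i <;> simp [hx]
  have hdisj : Disjoint
      (Finset.univ.filter (fun x : Cube n => Consistent x (Function.update ℓ i (some false))))
      (Finset.univ.filter (fun x : Cube n => Consistent x (Function.update ℓ i (some true)))) := by
    rw [Finset.disjoint_left]
    intro x hx hx'
    simp only [Finset.mem_filter, Finset.mem_univ, true_and,
      consistent_update ℓ i _ h] at hx hx'
    rw [hx.2] at hx'
    exact absurd hx'.2 (by simp)
  have hbij :
      (Finset.univ.filter (fun x : Cube n => Consistent x (Function.update ℓ i (some false)))).card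
      = (Finset.univ.filter (fun x : Cube n => Consistent x (Function.update ℓ i (some true)))).card := by
    refine Finset.card_bij' (fun x _ => Function.update x i true)
      (fun x _ => Function.update x i false) ?_ ?_ ?_ ?_ <;>
    · intro x hx
      simp only [Finset.mem_filter, Finset.mem_univ, true_and,
        consistent_update ℓ i _ h] at hx
      first
      | (simp only [Function.update_idem]; rw [← hx.2, Function.update_eq_self])
      | (rw [Finset.mem_filter, consistent_update ℓ i _ h]
         exact ⟨Finset.mem_univ _, consistent_update_point hx.1 i h _, by simp⟩)
  rw [hsplit, Finset.card_union_of_disjoint hdisj, two_mul]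
  cases b
  · rw [hbij]
  · rw [← hbij]

lemma dt_card {n d : ℕ} {T : Finset (Rst n)} (h : IsDT n d T) :
    ∀ ℓ ∈ T, (Finset.univ.filter (fun x : Cube n => Consistent x ℓ)).card * 2 ^ d = 2 ^ n := by
  induction h with
  | leaf =>
    intro ℓ hℓ; simp at hℓ; subst hℓ
    have : ∀ x : Cube n, Consistent x (fun _ => none) := by intro x j b hj; cases hj
    simp [Finset.filter_true_of_mem fun x _ => this x, Finset.card_univ]
  | @node d i T₀ T₁ h0 h1 e0 e1 ih0 ih1 =>
    intro ℓ hℓ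
    rw [Finset.mem_union] at hℓ
    rcases hℓ with hℓ | hℓ
    · obtain ⟨ℓ', hℓ', rfl⟩ := Finset.mem_image.mp hℓ
      have h2 := card_cons_update ℓ' i (e0 ℓ' hℓ') false
      have h3 := ih0 ℓ' hℓ'
      rw [← h2] at h3
      rw [← h3]; ring
    · obtain ⟨ℓ', hℓ', rfl⟩ := Finset.mem_image.mp hℓ
      have h2 := card_cons_update ℓ' i (e1 ℓ' hℓ') true
      have h3 := ih1 ℓ' hℓ'
      rw [← h2] at h3
      rw [← h3]; ring

/-- deterministic core of the lower-bound lemma: if every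
restriction of depth ≤ d captures between 1/3 and 2/3 of its subcube's points of `S`
(with `|S| = 2^{n−1}`), then the uniform distribution on `S` is 1/3-far in TV distance from
every distribution whose mass function is constant on each leaf of a depth-≤d decision tree. -/
theorem far_from_all_shallow_tree_distributions
    (n d : ℕ) (hn : 1 ≤ n) (hd : d ≤ n)
    (S : Finset (Cube n)) (hS : S.card = 2 ^ (n - 1))
    (hcount : ∀ ℓ : Rst n, rdepth ℓ ≤ d →
      (1 / 3 : ℝ) * 2 ^ (n - rdepth ℓ) ≤ ((S.filter (fun x => Consistent x ℓ)).card : ℝ) ∧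
      ((S.filter (fun x => Consistent x ℓ)).card : ℝ) ≤ (2 / 3 : ℝ) * 2 ^ (n - rdepth ℓ))
    (d' : ℕ) (hd' : d' ≤ d) (T : Finset (Rst n)) (hT : IsDT n d' T)
    (D' : Cube n → ℝ) (hD'0 : ∀ x, 0 ≤ D' x) (hD'1 : ∑ x : Cube n, D' x = 1)
    (hconst : ∀ ℓ ∈ T, ∀ x x' : Cube n, Consistent x ℓ → Consistent x' ℓ → D' x = D' x') :
    (1 / 3 : ℝ) ≤
      (1 / 2) * ∑ x : Cube n, |(if x ∈ S then ((S.card : ℝ))⁻¹ else 0) - D' x| := by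
  have hd'n : d' ≤ n := le_trans hd' hd
  have hScard : (0 : ℝ) < S.card := by rw [hS]; positivity
  -- the key bound : D'(S) ≤ 2/3
  have hPD : ∑ ℓ ∈ T, ∑ x ∈ Finset.univ.filter (fun x => Consistent x ℓ), D' x = 1 := by
    rw [dt_partition_sum hT D', hD'1]
  have hPS : ∑ ℓ ∈ T, ∑ x ∈ Finset.univ.filter (fun x => Consistent x ℓ),
      (if x ∈ S then D' x else 0) = ∑ x ∈ S, D' x := by
    rw [dt_partition_sum hT (fun x => if x ∈ S then D' x else 0),
      Finset.sum_ite_mem, Finset.univ_inter]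
  have hleaf : ∀ ℓ ∈ T, ∑ x ∈ Finset.univ.filter (fun x => Consistent x ℓ),
      (if x ∈ S then D' x else 0)
      ≤ (2 / 3 : ℝ) * ∑ x ∈ Finset.univ.filter (fun x => Consistent x ℓ), D' x := by
    intro ℓ hℓ
    set x₀ : Cube n := fun i => (ℓ i).getD true with hx₀def
    have hx₀ : Consistent x₀ ℓ := by intro j b hj; simp [hx₀def, hj]
    set c : ℝ := D' x₀ with hc
    have hc0 : 0 ≤ c := hD'0 x₀
    have hcx : ∀ x ∈ Finset.univ.filter (fun x => Consistent x ℓ), D' x = c := by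
      intro x hx
      exact hconst ℓ hℓ x x₀ (Finset.mem_filter.mp hx).2 hx₀
    have hrd : rdepth ℓ = d' := dt_rdepth hT ℓ hℓ
    -- the number of points consistent with ℓ
    have hNcard : (Finset.univ.filter (fun x : Cube n => Consistent x ℓ)).card
        = 2 ^ (n - d') := by
      have h1 := dt_card hT ℓ hℓ
      have h2 : (2 : ℕ) ^ (n - d') * 2 ^ d' = 2 ^ n := by
        rw [← pow_add, Nat.sub_add_cancel hd'n]
      exact Nat.eq_of_mul_eq_mul_right (by positivity) (h1.trans h2.symm)
    have hRHS : ∑ x ∈ Finset.univ.filter (fun x => Consistent x ℓ), D' x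
        = (2 ^ (n - d') : ℝ) * c := by
      rw [Finset.sum_congr rfl hcx, Finset.sum_const, hNcard, nsmul_eq_mul]
      push_cast; ring
    have hLHS : ∑ x ∈ Finset.univ.filter (fun x => Consistent x ℓ),
        (if x ∈ S then D' x else 0)
        = ((S.filter (fun x => Consistent x ℓ)).card : ℝ) * c := by
      have hcongr : ∀ x ∈ Finset.univ.filter (fun x => Consistent x ℓ),
          (if x ∈ S then D' x else 0) = (if x ∈ S then c else 0) := by
        intro x hx
        by_cases hxS : x ∈ S <;> simp [hxS, hcx x hx]
      rw [Finset.sum_congr rfl hcongr, Finset.sum_ite_mem]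
      have : Finset.univ.filter (fun x => Consistent x ℓ) ∩ S
          = S.filter (fun x => Consistent x ℓ) := by
        ext x
        simp [and_comm]
      rw [this, Finset.sum_const, nsmul_eq_mul]
    have hbound := (hcount ℓ (hrd ▸ hd')).2
    rw [hrd] at hbound
    rw [hLHS, hRHS, ← mul_assoc]
    exact mul_le_mul_of_nonneg_right hbound hc0
  have hkey : ∑ x ∈ S, D' x ≤ 2 / 3 := by
    calc ∑ x ∈ S, D' x
        = ∑ ℓ ∈ T, ∑ x ∈ Finset.univ.filter (fun x => Consistent x ℓ),
            (if x ∈ S then D' x else 0) := hPS.symm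
      _ ≤ ∑ ℓ ∈ T, (2 / 3 : ℝ) * ∑ x ∈ Finset.univ.filter (fun x => Consistent x ℓ), D' x :=
            Finset.sum_le_sum hleaf
      _ = (2 / 3 : ℝ) * ∑ ℓ ∈ T, ∑ x ∈ Finset.univ.filter (fun x => Consistent x ℓ), D' x := by
            rw [Finset.mul_sum]
      _ = 2 / 3 := by rw [hPD, mul_one]
  -- now the TV computation
  set U : Cube n → ℝ := fun x => if x ∈ S then ((S.card : ℝ))⁻¹ else 0 with hUdef
  have hUS : ∑ x ∈ S, U x = 1 := by
    have hcongr : ∀ x ∈ S, U x = ((S.card : ℝ))⁻¹ := fun x hx => if_pos hx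
    rw [Finset.sum_congr rfl hcongr, Finset.sum_const,
      nsmul_eq_mul, mul_inv_cancel₀ (ne_of_gt hScard)]
  have hUSc : ∑ x ∈ Sᶜ, U x = 0 := by
    refine Finset.sum_eq_zero fun x hx => ?_
    simp only [Finset.mem_compl] at hx
    simp [hUdef, hx]
  have hDsplit : ∑ x ∈ S, D' x + ∑ x ∈ Sᶜ, D' x = 1 := by
    rw [Finset.sum_add_sum_compl, hD'1]
  have h1 : ∑ x ∈ S, (U x - D' x) ≤ ∑ x ∈ S, |U x - D' x| :=
    Finset.sum_le_sum fun x _ => le_abs_self _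
  have h2 : ∑ x ∈ Sᶜ, (D' x - U x) ≤ ∑ x ∈ Sᶜ, |U x - D' x| :=
    Finset.sum_le_sum fun x _ => (abs_sub_comm (U x) (D' x)) ▸ le_abs_self _
  have hsplit : ∑ x ∈ S, |U x - D' x| + ∑ x ∈ Sᶜ, |U x - D' x|
      = ∑ x : Cube n, |U x - D' x| := Finset.sum_add_sum_compl S _
  rw [Finset.sum_sub_distrib] at h1 h2
  have hgoal : ∑ x : Cube n, |U x - D' x| ≥ 2 / 3 := by
    rw [← hsplit]
    have := hUS
    have := hUSc
    linarith
  calc (1 / 3 : ℝ) = (1 / 2) * (2 / 3) := by norm_num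
    _ ≤ (1 / 2) * ∑ x : Cube n, |U x - D' x| := by linarith
end

section
/- Let n ≥ 1 and 0 ≤ d ≤ n satisfy 2^{n−d} ≥ 18·ln(200·3^n). Draw S uniformly at random among all subsets of {±1}^n of size 2^{n−1}, and let D_S be the uniform distribution on S. Then the probability, over the choice of S, that there exist a distribution D' on {±1}^n and a decision tree T of depth at most d such that the probability mass function of D' is constant on each leaf of T and d_TV(D_S, D') ≤ 1/3, is at most 1/100. -/
open scoped Classical

section Aux
open Finset

variable {α : Type*} [Fintype α] [DecidableEq α]

lemma card_supersets_le (A : Finset α) (K : ℕ) :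
    ((Finset.univ.powersetCard K).filter (fun S : Finset α => A ⊆ S)).card
      ≤ (Fintype.card α - A.card).choose (K - A.card) := by
  have h : (Aᶜ.powersetCard (K - A.card)).card = (Fintype.card α - A.card).choose (K - A.card) := by
    rw [Finset.card_powersetCard, Finset.card_compl]
  rw [← h]
  apply Finset.card_le_card_of_injOn (fun S => S \ A)
  · intro S hS
    simp only [Finset.mem_coe, mem_filter, Finset.mem_powersetCard] at hS
    obtain ⟨⟨-, hcard⟩, hAS⟩ := hS
    simp only [Finset.mem_coe, Finset.mem_powersetCard]
    constructor
    · intro x hx; simp only [Finset.mem_sdiff] at hx; simp [Finset.mem_compl, hx.2]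
    · rw [Finset.card_sdiff_of_subset hAS, hcard]
  · intro S hS S' hS' h
    simp only [coe_filter, Set.mem_setOf_eq] at hS hS'
    have h2 : S \ A ∪ A = S' \ A ∪ A := by
      show (fun S => S \ A) S ∪ A = _ ; rw [h]
    rwa [Finset.sdiff_union_of_subset hS.2, Finset.sdiff_union_of_subset hS'.2] at h2

-- choose times 2^i bound : for 2K ≤ N, i ≤ K : 2^i * (N-i).choose (K-i) ≤ N.choose K
lemma two_pow_mul_choose_le {N K i : ℕ} (hNK : 2*K ≤ N) (hiK : i ≤ K) :
    2^i * (N-i).choose (K-i) ≤ N.choose K := by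
  induction i with
  | zero => simp
  | succ j ih =>
    have hjK : j ≤ K := Nat.le_of_succ_le hiK
    have ihj := ih hjK
    have key : 2 * ((N-j-1).choose (K-j-1)) ≤ (N-j).choose (K-j) := by
      have hb : 1 ≤ K - j := by omega
      have hid : (N-j) * (N-j-1).choose (K-j-1) = (N-j).choose (K-j) * (K-j) := by
        have := Nat.add_one_mul_choose_eq (N-j-1) (K-j-1)
        have h1 : (N-j-1)+1 = N-j := by omega
        have h2 : (K-j-1)+1 = K-j := by omega
        rwa [h1, h2] at this
      have step : 2 * ((N-j-1).choose (K-j-1)) * (K-j) ≤ (N-j).choose (K-j) * (K-j) := by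
        calc 2 * ((N-j-1).choose (K-j-1)) * (K-j)
            = (2*(K-j)) * ((N-j-1).choose (K-j-1)) := by ring
          _ ≤ (N-j) * ((N-j-1).choose (K-j-1)) := by
              apply Nat.mul_le_mul_right; omega
          _ = (N-j).choose (K-j) * (K-j) := hid
      exact Nat.le_of_mul_le_mul_right step (by omega)
    have e1 : N-(j+1) = N-j-1 := by omega
    have e2 : K-(j+1) = K-j-1 := by omega
    calc 2^(j+1) * (N-(j+1)).choose (K-(j+1)) = 2^j * (2 * ((N-j-1).choose (K-j-1))) := by
          rw [e1, e2, pow_succ]; ring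
      _ ≤ 2^j * ((N-j).choose (K-j)) := Nat.mul_le_mul_left _ key
      _ ≤ N.choose K := ihj

lemma count_superset_bound (A : Finset α) (K : ℕ) (hNK : 2*K ≤ Fintype.card α) :
    ((Finset.univ.powersetCard K).filter (fun S : Finset α => A ⊆ S)).card * 2^A.card
      ≤ (Fintype.card α).choose K := by
  by_cases hAK : A.card ≤ K
  · calc ((Finset.univ.powersetCard K).filter (fun S : Finset α => A ⊆ S)).card * 2^A.card
        ≤ (Fintype.card α - A.card).choose (K - A.card) * 2^A.card :=
          Nat.mul_le_mul_right _ (card_supersets_le A K)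
      _ = 2^A.card * (Fintype.card α - A.card).choose (K - A.card) := Nat.mul_comm _ _
      _ ≤ (Fintype.card α).choose K := two_pow_mul_choose_le hNK hAK
  · have h : ((Finset.univ.powersetCard K).filter (fun S : Finset α => A ⊆ S)) = ∅ := by
      apply Finset.filter_eq_empty_iff.mpr
      intro S hS hAS
      rw [Finset.mem_powersetCard] at hS
      exact hAK (hS.2 ▸ Finset.card_le_card hAS)
    simp [h]

lemma mgf_bound (C : Finset α) (K : ℕ) (hNK : 2*K ≤ Fintype.card α) :
    ∑ S ∈ Finset.univ.powersetCard K, (2:ℝ)^((S ∩ C).card)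
      ≤ (3/2)^C.card * ((Fintype.card α).choose K) := by
  have step1 : ∀ S : Finset α, (2:ℕ)^((S ∩ C).card)
      = (C.powerset.filter (fun A => A ⊆ S)).card := by
    intro S
    have h : C.powerset.filter (fun A => A ⊆ S) = (S ∩ C).powerset := by
      ext A
      simp only [Finset.mem_filter, Finset.mem_powerset, Finset.subset_inter_iff]
      tauto
    rw [h, Finset.card_powerset]
  have swapN : ∑ S ∈ Finset.univ.powersetCard K, (2:ℕ)^((S ∩ C).card)
      = ∑ A ∈ C.powerset,
          ((Finset.univ.powersetCard K).filter (fun S : Finset α => A ⊆ S)).card := by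
    simp_rw [step1, Finset.card_filter]
    exact Finset.sum_comm
  have swap : ∑ S ∈ Finset.univ.powersetCard K, ((2:ℕ)^((S ∩ C).card) : ℝ)
      = ∑ A ∈ C.powerset,
          (((Finset.univ.powersetCard K).filter (fun S : Finset α => A ⊆ S)).card : ℝ) := by
    exact_mod_cast congrArg (Nat.cast : ℕ → ℝ) swapN
  have perA : ∀ A ∈ C.powerset,
      (((Finset.univ.powersetCard K).filter (fun S : Finset α => A ⊆ S)).card : ℝ)
        ≤ ((Fintype.card α).choose K : ℝ) * (1/2)^A.card := by
    intro A _
    have h2 : (((Finset.univ.powersetCard K).filter (fun S : Finset α => A ⊆ S)).card : ℝ)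
        * 2^A.card ≤ ((Fintype.card α).choose K : ℝ) := by
      exact_mod_cast count_superset_bound A K hNK
    have hp : (0:ℝ) < 2^A.card := by positivity
    rw [div_pow, one_pow, mul_one_div, le_div_iff₀ hp]
    exact h2
  have sumpow : ∑ A ∈ C.powerset, ((1:ℝ)/2)^A.card = (3/2)^C.card := by
    rw [Finset.sum_powerset]
    rw [Finset.sum_congr rfl (fun j (hj : j ∈ Finset.range (C.card+1)) => by
      rw [Finset.sum_congr rfl (fun A (hA : A ∈ Finset.powersetCard j C) => by
            rw [(Finset.mem_powersetCard.mp hA).2]),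
          Finset.sum_const, Finset.card_powersetCard, nsmul_eq_mul])]
    have hbin := add_pow ((1:ℝ)/2) 1 C.card
    simp only [one_pow, mul_one] at hbin
    rw [show ((1:ℝ)/2 + 1) = 3/2 by norm_num] at hbin
    rw [hbin]
    exact Finset.sum_congr rfl (fun j _ => mul_comm _ _)
  have cast1 : ∑ S ∈ Finset.univ.powersetCard K, (2:ℝ)^((S ∩ C).card)
      = ∑ S ∈ Finset.univ.powersetCard K, ((2:ℕ)^((S ∩ C).card) : ℝ) := by
    apply Finset.sum_congr rfl; intro S _; push_cast; ring
  rw [cast1, swap]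
  calc ∑ A ∈ C.powerset,
          (((Finset.univ.powersetCard K).filter (fun S : Finset α => A ⊆ S)).card : ℝ)
      ≤ ∑ A ∈ C.powerset, ((Fintype.card α).choose K : ℝ) * (1/2)^A.card :=
        Finset.sum_le_sum perA
    _ = ((Fintype.card α).choose K : ℝ) * ∑ A ∈ C.powerset, ((1:ℝ)/2)^A.card := by
        rw [Finset.mul_sum]
    _ = (3/2)^C.card * ((Fintype.card α).choose K) := by rw [sumpow]; ring

lemma base_ineq : (3/2:ℝ) * Real.exp (1/18) ≤ (2:ℝ)^((2:ℝ)/3) := by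
  have h0 : (0:ℝ) ≤ (3/2:ℝ) * Real.exp (1/18) := by positivity
  have h1 : (0:ℝ) ≤ (2:ℝ)^((2:ℝ)/3) := by positivity
  rw [← pow_le_pow_iff_left₀ h0 h1 (n := 18) (by norm_num)]
  have hL : ((3/2:ℝ) * Real.exp (1/18))^18 = (3/2:ℝ)^18 * Real.exp 1 := by
    rw [mul_pow, ← Real.exp_nat_mul]
    norm_num
  have hR : ((2:ℝ)^((2:ℝ)/3))^18 = 4096 := by
    rw [← Real.rpow_natCast ((2:ℝ)^((2:ℝ)/3)) 18, ← Real.rpow_mul (by norm_num)]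
    rw [show ((2:ℝ)/3 * (18:ℕ)) = ((12:ℕ):ℝ) by norm_num, Real.rpow_natCast]
    norm_num
  rw [hL, hR]
  nlinarith [Real.exp_one_lt_d9, Real.exp_pos 1]

lemma exp_ineq (m : ℕ) : (3/2:ℝ)^m ≤ (2:ℝ)^((2:ℝ)/3 * m) * Real.exp (-(m:ℝ)/18) := by
  have key : ((3/2:ℝ) * Real.exp (1/18))^m ≤ ((2:ℝ)^((2:ℝ)/3))^m :=
    pow_le_pow_left₀ (by positivity) base_ineq m
  have hL : ((3/2:ℝ) * Real.exp (1/18))^m = (3/2:ℝ)^m * Real.exp ((m:ℝ)/18) := by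
    rw [mul_pow, ← Real.exp_nat_mul]
    rw [show (m:ℝ) * (1/18) = (m:ℝ)/18 by ring]
  have hR : ((2:ℝ)^((2:ℝ)/3))^m = (2:ℝ)^((2:ℝ)/3 * m) := by
    rw [← Real.rpow_natCast ((2:ℝ)^((2:ℝ)/3)) m, ← Real.rpow_mul (by norm_num)]
  rw [hL, hR] at key
  have hpos := Real.exp_pos ((m:ℝ)/18)
  rw [show (-(m:ℝ)/18) = -((m:ℝ)/18) by ring, Real.exp_neg, ← div_eq_mul_inv]
  exact (le_div_iff₀ hpos).mpr key

lemma badplus_bound (C : Finset α) (K : ℕ) (hN : Fintype.card α = 2*K) :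
    ((((Finset.univ : Finset α).powersetCard K).filter
        (fun S => 2*C.card ≤ 3*(S ∩ C).card)).card : ℝ)
      ≤ Real.exp (-(C.card:ℝ)/18) * ((Fintype.card α).choose K) := by
  set 𝒮 := (Finset.univ : Finset α).powersetCard K with h𝒮
  set B := 𝒮.filter (fun S => 2*C.card ≤ 3*(S ∩ C).card) with hB
  set m := C.card with hm
  have hthr : (0:ℝ) < (2:ℝ)^((2:ℝ)/3 * m) := Real.rpow_pos_of_pos (by norm_num) _
  have key : (B.card : ℝ) * (2:ℝ)^((2:ℝ)/3 * m) ≤ (3/2)^m * ((Fintype.card α).choose K) := by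
    calc (B.card : ℝ) * (2:ℝ)^((2:ℝ)/3 * m) = ∑ _S ∈ B, (2:ℝ)^((2:ℝ)/3 * m) := by
          rw [Finset.sum_const, nsmul_eq_mul]
      _ ≤ ∑ S ∈ B, (2:ℝ)^((S ∩ C).card) := by
          apply Finset.sum_le_sum
          intro S hS
          rw [hB, Finset.mem_filter] at hS
          rw [← Real.rpow_natCast (2:ℝ) ((S ∩ C).card)]
          apply Real.rpow_le_rpow_left_iff (by norm_num : (1:ℝ) < 2) |>.mpr
          have := hS.2
          rw [div_mul_eq_mul_div, div_le_iff₀ (by norm_num : (0:ℝ) < 3)]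
          have hc : ((2*m:ℕ):ℝ) ≤ ((3*(S ∩ C).card:ℕ):ℝ) := Nat.cast_le.mpr hS.2
          push_cast at hc ⊢
          linarith
      _ ≤ ∑ S ∈ 𝒮, (2:ℝ)^((S ∩ C).card) := by
          apply Finset.sum_le_sum_of_subset_of_nonneg (Finset.filter_subset _ _)
          intro S _ _; positivity
      _ ≤ (3/2)^m * ((Fintype.card α).choose K) := mgf_bound C K (le_of_eq hN.symm)
  have key2 : (B.card : ℝ) * (2:ℝ)^((2:ℝ)/3 * m)
      ≤ (Real.exp (-(m:ℝ)/18) * ((Fintype.card α).choose K)) * (2:ℝ)^((2:ℝ)/3 * m) := by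
    calc (B.card : ℝ) * (2:ℝ)^((2:ℝ)/3 * m) ≤ (3/2)^m * ((Fintype.card α).choose K) := key
      _ ≤ ((2:ℝ)^((2:ℝ)/3 * m) * Real.exp (-(m:ℝ)/18)) * ((Fintype.card α).choose K) := by
          apply mul_le_mul_of_nonneg_right (exp_ineq m) (by positivity)
      _ = (Real.exp (-(m:ℝ)/18) * ((Fintype.card α).choose K)) * (2:ℝ)^((2:ℝ)/3 * m) := by
          ring
  exact le_of_mul_le_mul_right key2 hthr

lemma bad_count (C : Finset α) (K : ℕ) (hN : Fintype.card α = 2*K) :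
    ((((Finset.univ : Finset α).powersetCard K).filter
        (fun S => 3*(S ∩ C).card ≤ C.card ∨ 2*C.card ≤ 3*(S ∩ C).card)).card : ℝ)
      ≤ 2 * Real.exp (-(C.card:ℝ)/18) * ((Fintype.card α).choose K) := by
  set 𝒮 := (Finset.univ : Finset α).powersetCard K with h𝒮
  have hsplit : 𝒮.filter (fun S => 3*(S ∩ C).card ≤ C.card ∨ 2*C.card ≤ 3*(S ∩ C).card)
      ⊆ 𝒮.filter (fun S => 3*(S ∩ C).card ≤ C.card)
        ∪ 𝒮.filter (fun S => 2*C.card ≤ 3*(S ∩ C).card) := by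
    intro S hS
    rw [Finset.mem_filter] at hS
    rw [Finset.mem_union, Finset.mem_filter, Finset.mem_filter]
    tauto
  have hminus : (𝒮.filter (fun S => 3*(S ∩ C).card ≤ C.card)).card
      ≤ (𝒮.filter (fun S => 2*C.card ≤ 3*(S ∩ C).card)).card := by
    apply Finset.card_le_card_of_injOn (fun S => Sᶜ)
    · intro S hS
      simp only [Finset.mem_coe, Finset.mem_filter] at hS ⊢
      obtain ⟨hS𝒮, hSb⟩ := hS
      rw [Finset.mem_powersetCard] at hS𝒮
      have hkm : (S ∩ C).card ≤ C.card := Finset.card_le_card (Finset.inter_subset_right)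
      have hcompl : (Sᶜ ∩ C).card = C.card - (S ∩ C).card := by
        have h1 : Sᶜ ∩ C = C \ S := by
          ext x; simp [Finset.mem_compl, Finset.mem_sdiff, and_comm]
        rw [h1, ← Finset.card_inter_add_card_sdiff C S, Finset.inter_comm]
        omega
      constructor
      · rw [Finset.mem_powersetCard]
        refine ⟨Finset.subset_univ _, ?_⟩
        rw [Finset.card_compl, hS𝒮.2, hN]
        omega
      · rw [hcompl]; omega
    · intro S _ S' _ h
      exact compl_injective h
  calc ((𝒮.filter (fun S => 3*(S ∩ C).card ≤ C.card ∨ 2*C.card ≤ 3*(S ∩ C).card)).card : ℝ)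
      ≤ ((𝒮.filter (fun S => 3*(S ∩ C).card ≤ C.card)
          ∪ 𝒮.filter (fun S => 2*C.card ≤ 3*(S ∩ C).card)).card : ℝ) := by
        exact_mod_cast Nat.cast_le.mpr (Finset.card_le_card hsplit)
    _ ≤ ((𝒮.filter (fun S => 3*(S ∩ C).card ≤ C.card)).card : ℝ)
        + ((𝒮.filter (fun S => 2*C.card ≤ 3*(S ∩ C).card)).card : ℝ) := by
        exact_mod_cast Nat.cast_le.mpr (Finset.card_union_le _ _)
    _ ≤ ((𝒮.filter (fun S => 2*C.card ≤ 3*(S ∩ C).card)).card : ℝ)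
        + ((𝒮.filter (fun S => 2*C.card ≤ 3*(S ∩ C).card)).card : ℝ) := by
        have := Nat.cast_le (α := ℝ) |>.mpr hminus
        linarith
    _ ≤ 2 * Real.exp (-(C.card:ℝ)/18) * ((Fintype.card α).choose K) := by
        have := badplus_bound C K hN
        linarith

end Aux

lemma consistent_update_iff {n : ℕ} (x : Cube n) (ℓ : Rst n) (i : Fin n) (b : Bool)
    (hi : ℓ i = none) :
    Consistent x (Function.update ℓ i (some b)) ↔ (x i = b ∧ Consistent x ℓ) := by
  constructor
  · intro h
    refine ⟨h i b (by simp), ?_⟩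
    intro j c hj
    by_cases hji : j = i
    · subst hji; rw [hi] at hj; cases hj
    · exact h j c (by rwa [Function.update_of_ne hji])
  · rintro ⟨hxi, h⟩ j c hj
    by_cases hji : j = i
    · subst hji
      rw [Function.update_self] at hj
      cases hj; exact hxi
    · rw [Function.update_of_ne hji] at hj
      exact h j c hj

lemma isDT_unique_leaf {n d : ℕ} {T : Finset (Rst n)} (h : IsDT n d T) (x : Cube n) :
    ∃! ℓ, ℓ ∈ T ∧ Consistent x ℓ := by
  induction h with
  | leaf =>
    refine ⟨fun _ => none, ⟨Finset.mem_singleton_self _, fun i b hb => by cases hb⟩, ?_⟩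
    rintro ℓ ⟨hℓ, -⟩
    exact Finset.mem_singleton.mp hℓ
  | node i h₀ h₁ hn₀ hn₁ ih₀ ih₁ =>
    rename_i d' T₀ T₁
    -- wlog via the boolean value x i
    obtain ⟨ℓ₀, ⟨hmem₀, hcons₀⟩, huniq₀⟩ := ih₀
    obtain ⟨ℓ₁, ⟨hmem₁, hcons₁⟩, huniq₁⟩ := ih₁
    cases hx : x i
    · refine ⟨Function.update ℓ₀ i (some false), ⟨?_, ?_⟩, ?_⟩
      · exact Finset.mem_union_left _ (Finset.mem_image_of_mem _ hmem₀)
      · exact (consistent_update_iff x ℓ₀ i false (hn₀ _ hmem₀)).mpr ⟨hx, hcons₀⟩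
      · rintro ℓ' ⟨hℓ', hcons'⟩
        rcases Finset.mem_union.mp hℓ' with hl | hr
        · obtain ⟨ℓ₀', hℓ₀', rfl⟩ := Finset.mem_image.mp hl
          obtain ⟨-, hc⟩ := (consistent_update_iff x ℓ₀' i false (hn₀ _ hℓ₀')).mp hcons'
          rw [huniq₀ ℓ₀' ⟨hℓ₀', hc⟩]
        · obtain ⟨ℓ₁', hℓ₁', rfl⟩ := Finset.mem_image.mp hr
          obtain ⟨hxi, -⟩ := (consistent_update_iff x ℓ₁' i true (hn₁ _ hℓ₁')).mp hcons'
          rw [hx] at hxi; cases hxi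
    · refine ⟨Function.update ℓ₁ i (some true), ⟨?_, ?_⟩, ?_⟩
      · exact Finset.mem_union_right _ (Finset.mem_image_of_mem _ hmem₁)
      · exact (consistent_update_iff x ℓ₁ i true (hn₁ _ hmem₁)).mpr ⟨hx, hcons₁⟩
      · rintro ℓ' ⟨hℓ', hcons'⟩
        rcases Finset.mem_union.mp hℓ' with hl | hr
        · obtain ⟨ℓ₀', hℓ₀', rfl⟩ := Finset.mem_image.mp hl
          obtain ⟨hxi, -⟩ := (consistent_update_iff x ℓ₀' i false (hn₀ _ hℓ₀')).mp hcons'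
          rw [hx] at hxi; cases hxi
        · obtain ⟨ℓ₁', hℓ₁', rfl⟩ := Finset.mem_image.mp hr
          obtain ⟨-, hc⟩ := (consistent_update_iff x ℓ₁' i true (hn₁ _ hℓ₁')).mp hcons'
          rw [huniq₁ ℓ₁' ⟨hℓ₁', hc⟩]

lemma rdepth_update_le {n : ℕ} (ℓ : Rst n) (i : Fin n) (b : Bool) :
    rdepth (Function.update ℓ i (some b)) ≤ rdepth ℓ + 1 := by
  unfold rdepth
  have hsub : (Finset.univ.filter (fun j => Function.update ℓ i (some b) j ≠ none))
      ⊆ insert i (Finset.univ.filter (fun j => ℓ j ≠ none)) := by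
    intro j hj
    rw [Finset.mem_filter] at hj
    by_cases hji : j = i
    · exact Finset.mem_insert.mpr (Or.inl hji)
    · refine Finset.mem_insert.mpr (Or.inr ?_)
      rw [Finset.mem_filter]
      refine ⟨Finset.mem_univ _, ?_⟩
      rw [Function.update_of_ne hji] at hj
      exact hj.2
  calc (Finset.univ.filter (fun j => Function.update ℓ i (some b) j ≠ none)).card
      ≤ (insert i (Finset.univ.filter (fun j => ℓ j ≠ none))).card := Finset.card_le_card hsub
    _ ≤ _ := Finset.card_insert_le _ _

lemma isDT_rdepth {n d : ℕ} {T : Finset (Rst n)} (h : IsDT n d T) :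
    ∀ ℓ ∈ T, rdepth ℓ ≤ d := by
  induction h with
  | leaf =>
    intro ℓ hℓ
    rw [Finset.mem_singleton] at hℓ
    subst hℓ
    simp [rdepth]
  | node i h₀ h₁ hn₀ hn₁ ih₀ ih₁ =>
    intro ℓ hℓ
    rcases Finset.mem_union.mp hℓ with hl | hr
    · obtain ⟨ℓ₀, hℓ₀, rfl⟩ := Finset.mem_image.mp hl
      exact le_trans (rdepth_update_le _ _ _) (Nat.add_le_add_right (ih₀ _ hℓ₀) 1)
    · obtain ⟨ℓ₁, hℓ₁, rfl⟩ := Finset.mem_image.mp hr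
      exact le_trans (rdepth_update_le _ _ _) (Nat.add_le_add_right (ih₁ _ hℓ₁) 1)

lemma card_consistent {n : ℕ} (ρ : Rst n) :
    (Finset.univ.filter (fun x : Cube n => Consistent x ρ)).card = 2^(n - rdepth ρ) := by
  have e : {x : Cube n // Consistent x ρ} ≃ ({i : Fin n // ρ i = none} → Bool) :=
    { toFun := fun x i => x.1 i.1
      invFun := fun h => ⟨fun j => if hj : ρ j = none then h ⟨j, hj⟩ else (ρ j).iget, by
        intro j b hj
        simp only []
        rw [dif_neg (by rw [hj]; simp), hj]⟩
      left_inv := by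
        rintro ⟨x, hx⟩
        ext j
        show (if hj : ρ j = none then x j else (ρ j).iget) = x j
        by_cases hj : ρ j = none
        · rw [dif_pos hj]
        · rw [dif_neg hj]
          obtain ⟨b, hb⟩ := Option.ne_none_iff_exists'.mp hj
          rw [hb, hx j b hb]
      right_inv := by
        intro h
        ext i
        show (if hj : ρ i.1 = none then h ⟨i.1, hj⟩ else (ρ i.1).iget) = h i
        rw [dif_pos i.2] }
  have h1 : Fintype.card {x : Cube n // Consistent x ρ}
      = (Finset.univ.filter (fun x : Cube n => Consistent x ρ)).card :=
    Fintype.card_subtype _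
  have h2 : Fintype.card ({i : Fin n // ρ i = none} → Bool)
      = 2 ^ Fintype.card {i : Fin n // ρ i = none} := by
    simp [Fintype.card_fun]
  have h3 : Fintype.card {i : Fin n // ρ i = none}
      = (Finset.univ.filter (fun i : Fin n => ρ i = none)).card := Fintype.card_subtype _
  have h4 : (Finset.univ.filter (fun i : Fin n => ρ i = none)).card = n - rdepth ρ := by
    have := Finset.card_filter_add_card_filter_not
      (s := (Finset.univ : Finset (Fin n))) (p := fun i => ρ i = none)
    simp only [Finset.card_univ, Fintype.card_fin] at this
    unfold rdepth
    have h5 : (Finset.univ.filter (fun i : Fin n => ¬ ρ i = none)).card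
        = (Finset.univ.filter (fun i : Fin n => ρ i ≠ none)).card := rfl
    omega
  rw [← h1, Fintype.card_congr e, h2, h3, h4]

lemma det_far {n d : ℕ} (hn : 1 ≤ n) (S : Finset (Cube n)) (hScard : S.card = 2^(n-1))
    (hG : ∀ ρ : Rst n, rdepth ρ ≤ d →
      (Finset.univ.filter (fun x : Cube n => Consistent x ρ)).card
          < 3*((S ∩ Finset.univ.filter (fun x : Cube n => Consistent x ρ)).card)
        ∧ 3*((S ∩ Finset.univ.filter (fun x : Cube n => Consistent x ρ)).card)
          < 2*(Finset.univ.filter (fun x : Cube n => Consistent x ρ)).card)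
    (D' : Cube n → ℝ) (d' : ℕ) (hd' : d' ≤ d) (T : Finset (Rst n)) (hT : IsDT n d' T)
    (hconst : ∀ ℓ ∈ T, ∀ x x' : Cube n, Consistent x ℓ → Consistent x' ℓ → D' x = D' x') :
    (1/3 : ℝ) < (1/2 : ℝ) * ∑ x : Cube n,
        |(if x ∈ S then ((S.card : ℝ))⁻¹ else 0) - D' x| := by
  set u : ℝ := ((S.card : ℝ))⁻¹ with hu
  have hupos : 0 < u := by
    rw [hu, hScard]; positivity
  -- the leaf map
  have hex : ∀ x : Cube n, ∃ ℓ, ℓ ∈ T ∧ Consistent x ℓ := fun x => (isDT_unique_leaf hT x).exists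
  set f : Cube n → Rst n := fun x => Classical.choose (hex x) with hf
  have hfT : ∀ x, f x ∈ T := fun x => (Classical.choose_spec (hex x)).1
  have hfC : ∀ x, Consistent x (f x) := fun x => (Classical.choose_spec (hex x)).2
  have hfuniq : ∀ x (ℓ : Rst n), ℓ ∈ T → Consistent x ℓ → f x = ℓ := by
    intro x ℓ hℓ hc
    exact (isDT_unique_leaf hT x).unique ⟨hfT x, hfC x⟩ ⟨hℓ, hc⟩
  -- fibers are the consistency sets
  have hfiber : ∀ ℓ ∈ T, Finset.univ.filter (fun x : Cube n => f x = ℓ)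
      = Finset.univ.filter (fun x : Cube n => Consistent x ℓ) := by
    intro ℓ hℓ
    ext x
    simp only [Finset.mem_filter, Finset.mem_univ, true_and]
    constructor
    · rintro rfl; exact hfC x
    · intro hc; exact hfuniq x ℓ hℓ hc
  -- decomposition of any sum over the cube
  have hdecomp : ∀ F : Cube n → ℝ, ∑ x : Cube n, F x
      = ∑ ℓ ∈ T, ∑ x ∈ Finset.univ.filter (fun x : Cube n => Consistent x ℓ), F x := by
    intro F
    rw [← Finset.sum_fiberwise_of_maps_to (fun x _ => hfT x) F]
    exact Finset.sum_congr rfl (fun ℓ hℓ => by rw [hfiber ℓ hℓ])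
  -- per-leaf lower bound
  have hleaf : ∀ ℓ ∈ T,
      ((Finset.univ.filter (fun x : Cube n => Consistent x ℓ)).card + 1 : ℝ)/3 * u
        ≤ ∑ x ∈ Finset.univ.filter (fun x : Cube n => Consistent x ℓ),
            |(if x ∈ S then u else 0) - D' x| := by
    intro ℓ hℓ
    set Cl := Finset.univ.filter (fun x : Cube n => Consistent x ℓ) with hCl
    set m := Cl.card with hm
    set k := (S ∩ Cl).card with hk
    have hGl := hG ℓ (le_trans (isDT_rdepth hT ℓ hℓ) hd')
    rw [← hCl, ← hm, ← hk] at hGl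
    have hk1 : 1 ≤ k := by omega
    have hkm : k ≤ m := by
      rw [hk, hm]; exact Finset.card_le_card (Finset.inter_subset_right)
    -- a point of Cl
    obtain ⟨x₀, hx₀⟩ : Cl.Nonempty := by
      rcases (Finset.card_pos.mp (by omega : 0 < k)) with ⟨y, hy⟩
      exact ⟨y, (Finset.mem_inter.mp hy).2⟩
    set c := D' x₀ with hc
    have hx₀c : Consistent x₀ ℓ := (Finset.mem_filter.mp hx₀).2
    have hDconst : ∀ x ∈ Cl, D' x = c := by
      intro x hx
      exact hconst ℓ hℓ x x₀ (Finset.mem_filter.mp hx).2 hx₀c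
    -- split the sum
    have hsplit : ∑ x ∈ Cl, |(if x ∈ S then u else 0) - D' x|
        = ∑ x ∈ Cl ∩ S, |(if x ∈ S then u else 0) - D' x|
          + ∑ x ∈ Cl \ S, |(if x ∈ S then u else 0) - D' x| := by
      rw [Finset.sum_inter_add_sum_sdiff]
    have hCS : (Cl ∩ S).card = k := by rw [hk, Finset.inter_comm]
    have hCdS : (Cl \ S).card = m - k := by
      have := Finset.card_inter_add_card_sdiff Cl S
      rw [Finset.inter_comm] at this
      omega
    have hs1 : ∑ x ∈ Cl ∩ S, |(if x ∈ S then u else 0) - D' x| = k * |u - c| := by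
      rw [Finset.sum_congr rfl (fun x hx => by
        rw [if_pos (Finset.mem_inter.mp hx).2, hDconst x (Finset.mem_inter.mp hx).1]),
        Finset.sum_const, hCS, nsmul_eq_mul]
    have hs2 : ∑ x ∈ Cl \ S, |(if x ∈ S then u else 0) - D' x| = (m - k : ℕ) * |c| := by
      rw [Finset.sum_congr rfl (fun x hx => by
        rw [if_neg (Finset.mem_sdiff.mp hx).2, hDconst x (Finset.mem_sdiff.mp hx).1,
          zero_sub, abs_neg]),
        Finset.sum_const, hCdS, nsmul_eq_mul]
    have htri : u ≤ |u - c| + |c| := by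
      calc u = |u - c + c| := by rw [sub_add_cancel]; exact (abs_of_pos hupos).symm
        _ ≤ |u - c| + |c| := abs_add_le _ _
    have hmin1 : ((m:ℝ) + 1)/3 ≤ (k : ℝ) := by
      have : m + 1 ≤ 3 * k := by omega
      have h3 : ((m + 1 : ℕ) : ℝ) ≤ ((3 * k : ℕ) : ℝ) := Nat.cast_le.mpr this
      push_cast at h3
      linarith
    have hmin2 : ((m:ℝ) + 1)/3 ≤ ((m - k : ℕ) : ℝ) := by
      have h4 : m + 1 ≤ 3 * (m - k) := by omega
      have h3 : ((m + 1 : ℕ) : ℝ) ≤ ((3 * (m - k) : ℕ) : ℝ) := Nat.cast_le.mpr h4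
      push_cast at h3
      linarith
    rw [hsplit, hs1, hs2]
    calc ((m:ℝ) + 1)/3 * u ≤ ((m:ℝ)+1)/3 * (|u - c| + |c|) := by
          apply mul_le_mul_of_nonneg_left htri (by positivity)
      _ = ((m:ℝ)+1)/3 * |u - c| + ((m:ℝ)+1)/3 * |c| := by ring
      _ ≤ (k:ℝ) * |u - c| + ((m - k : ℕ):ℝ) * |c| := by
          apply add_le_add
          · exact mul_le_mul_of_nonneg_right hmin1 (abs_nonneg _)
          · exact mul_le_mul_of_nonneg_right hmin2 (abs_nonneg _)
  -- sum of subcube sizes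
  have hsizes : ∑ ℓ ∈ T, ((Finset.univ.filter (fun x : Cube n => Consistent x ℓ)).card : ℝ)
      = (2:ℝ)^n := by
    have := hdecomp (fun _ => (1:ℝ))
    simp only [Finset.sum_const, nsmul_eq_mul, mul_one] at this
    rw [Finset.card_univ] at this
    have hcard : Fintype.card (Cube n) = 2^n := by
      simp [Fintype.card_fun]
    rw [hcard] at this
    rw [← this]
    push_cast
    rfl
  have hTne : T.Nonempty := ⟨f (fun _ => false), hfT _⟩
  have hT1 : (1:ℝ) ≤ T.card := by
    have := Finset.card_pos.mpr hTne
    exact_mod_cast this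
  -- put it together
  have hsum2 : ∑ ℓ ∈ T,
      (((Finset.univ.filter (fun x : Cube n => Consistent x ℓ)).card + 1 : ℝ))/3 * u
      = ((2:ℝ)^n + T.card)/3 * u := by
    rw [← Finset.sum_mul, ← Finset.sum_div, Finset.sum_add_distrib, Finset.sum_const,
      nsmul_eq_mul, mul_one, hsizes]
  have htotal : ((2:ℝ)^n + 1)/3 * u ≤ ∑ x : Cube n, |(if x ∈ S then u else 0) - D' x| := by
    rw [hdecomp]
    calc ((2:ℝ)^n + 1)/3 * u ≤ ((2:ℝ)^n + T.card)/3 * u := by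
          apply mul_le_mul_of_nonneg_right ?_ (le_of_lt hupos)
          apply div_le_div_of_nonneg_right ?_ ?_
          · linarith
          · norm_num
      _ = ∑ ℓ ∈ T,
          (((Finset.univ.filter (fun x : Cube n => Consistent x ℓ)).card + 1 : ℝ))/3 * u :=
          hsum2.symm
      _ ≤ _ := Finset.sum_le_sum hleaf
  have hun : (2:ℝ)^n * u = 2 := by
    rw [hu, hScard]
    have h2n : (2:ℝ)^n = 2 * ((2^(n-1) : ℕ) : ℝ) := by
      push_cast
      rw [← pow_succ']
      congr 1
      omega
    rw [h2n]
    have : ((2^(n-1):ℕ):ℝ) ≠ 0 := by positivity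
    field_simp
  have hfinal : (2:ℝ)/3 < ∑ x : Cube n, |(if x ∈ S then u else 0) - D' x| := by
    calc (2:ℝ)/3 < ((2:ℝ)^n * u + u)/3 := by
          rw [hun]; linarith
      _ = ((2:ℝ)^n + 1)/3 * u := by ring
      _ ≤ _ := htotal
  linarith

/-- with probability ≥ 99/100 over a uniformly random half-subset `S` of the
cube, the uniform distribution on `S` is 1/3-far from every distribution whose mass
function is constant on the leaves of some decision tree of depth at most `d`,
provided `2^{n−d} ≥ 18·ln(200·3^n)`. -/
theorem random_half_subset_robustly_requires_large_depth
    (n d : ℕ) (hn : 1 ≤ n) (hd : d ≤ n)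
    (hcond : 18 * Real.log (200 * 3 ^ n) ≤ (2 : ℝ) ^ (n - d)) :
    ((((Finset.univ : Finset (Cube n)).powersetCard (2 ^ (n - 1))).filter
        (fun S : Finset (Cube n) =>
          ∃ D' : Cube n → ℝ, (∀ x, 0 ≤ D' x) ∧ (∑ x : Cube n, D' x = 1) ∧
            ∃ d' ≤ d, ∃ T : Finset (Rst n), IsDT n d' T ∧
              (∀ ℓ ∈ T, ∀ x x' : Cube n, Consistent x ℓ → Consistent x' ℓ → D' x = D' x') ∧
              (1 / 2 : ℝ) * ∑ x : Cube n,
                  |(if x ∈ S then ((S.card : ℝ))⁻¹ else 0) - D' x| ≤ 1 / 3)).card : ℝ)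
      / (((Finset.univ : Finset (Cube n)).powersetCard (2 ^ (n - 1))).card : ℝ)
      ≤ 1 / 100 := by
  classical
  set K : ℕ := 2^(n-1) with hK
  set 𝒮 : Finset (Finset (Cube n)) := (Finset.univ : Finset (Cube n)).powersetCard K with h𝒮
  have hNcube : Fintype.card (Cube n) = 2*K := by
    rw [hK]
    simp only [Fintype.card_fun, Fintype.card_bool, Fintype.card_fin]
    rw [← pow_succ']
    congr 1
    omega
  -- the per-restriction subcube and bad event
  set Cs : Rst n → Finset (Cube n) :=
    fun ρ => Finset.univ.filter (fun x : Cube n => Consistent x ρ) with hCs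
  set badP : Rst n → Finset (Cube n) → Prop :=
    fun ρ S => 3*(S ∩ Cs ρ).card ≤ (Cs ρ).card ∨ 2*(Cs ρ).card ≤ 3*(S ∩ Cs ρ).card with hbadP
  set R : Finset (Rst n) := Finset.univ.filter (fun ρ : Rst n => rdepth ρ ≤ d) with hR
  set Bad := (𝒮.filter
        (fun S : Finset (Cube n) =>
          ∃ D' : Cube n → ℝ, (∀ x, 0 ≤ D' x) ∧ (∑ x : Cube n, D' x = 1) ∧
            ∃ d' ≤ d, ∃ T : Finset (Rst n), IsDT n d' T ∧
              (∀ ℓ ∈ T, ∀ x x' : Cube n, Consistent x ℓ → Consistent x' ℓ → D' x = D' x') ∧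
              (1 / 2 : ℝ) * ∑ x : Cube n,
                  |(if x ∈ S then ((S.card : ℝ))⁻¹ else 0) - D' x| ≤ 1 / 3)) with hBad
  -- step 1 : inclusion in the union of per-restriction bad events
  have hincl : Bad ⊆ R.biUnion (fun ρ => 𝒮.filter (badP ρ)) := by
    intro S hS
    rw [hBad, Finset.mem_filter] at hS
    obtain ⟨hS𝒮, D', hpos, hsum, d', hd', T, hT, hconst, hTV⟩ := hS
    by_contra hnot
    rw [Finset.mem_biUnion] at hnot
    push_neg at hnot
    have hG : ∀ ρ : Rst n, rdepth ρ ≤ d →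
        (Cs ρ).card < 3*((S ∩ Cs ρ).card) ∧ 3*((S ∩ Cs ρ).card) < 2*(Cs ρ).card := by
      intro ρ hρ
      have hmem : ρ ∈ R := by rw [hR, Finset.mem_filter]; exact ⟨Finset.mem_univ _, hρ⟩
      have := hnot ρ hmem
      rw [Finset.mem_filter] at this
      push_neg at this
      have h2 := this hS𝒮
      rw [hbadP] at h2
      push_neg at h2
      omega
    have hScard : S.card = 2^(n-1) := by
      have := (Finset.mem_powersetCard.mp hS𝒮).2
      rw [← hK]; exact this
    have := det_far hn S hScard hG D' d' hd' T hT hconst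
    linarith
  -- step 2 : counting
  have hRcard : (R.card : ℝ) ≤ (3:ℝ)^n := by
    have h1 : R.card ≤ Fintype.card (Rst n) := by
      rw [← Finset.card_univ]
      exact Finset.card_le_card (Finset.filter_subset _ _)
    have h2 : Fintype.card (Rst n) = 3^n := by
      simp [Fintype.card_fun]
    calc (R.card : ℝ) ≤ (Fintype.card (Rst n) : ℝ) := Nat.cast_le.mpr h1
      _ = (3:ℝ)^n := by rw [h2]; push_cast; rfl
  have hper : ∀ ρ ∈ R, ((𝒮.filter (badP ρ)).card : ℝ)
      ≤ (1/(100 * 3^n)) * ((Fintype.card (Cube n)).choose K : ℝ) := by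
    intro ρ hρ
    have hρd : rdepth ρ ≤ d := (Finset.mem_filter.mp hρ).2
    have hcount := bad_count (Cs ρ) K hNcube
    have hm : (Cs ρ).card = 2^(n - rdepth ρ) := card_consistent ρ
    -- exp bound
    have hmono : ((2:ℝ)^(n-d)) ≤ (((Cs ρ).card : ℕ) : ℝ) := by
      rw [hm]
      have : (2:ℕ)^(n-d) ≤ 2^(n - rdepth ρ) := Nat.pow_le_pow_right (by norm_num) (by omega)
      calc ((2:ℝ)^(n-d)) = (((2:ℕ)^(n-d) : ℕ) : ℝ) := by push_cast; rfl
        _ ≤ _ := Nat.cast_le.mpr this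
    have hexp : Real.exp (-((Cs ρ).card : ℝ)/18) ≤ 1/(200 * 3^n) := by
      have h200 : (0:ℝ) < 200 * 3^n := by positivity
      have hlog : (200 * 3^n : ℝ) ≤ Real.exp (((Cs ρ).card : ℝ)/18) := by
        calc (200 * 3^n : ℝ) = Real.exp (Real.log (200 * 3^n)) := (Real.exp_log h200).symm
          _ ≤ Real.exp (((Cs ρ).card : ℝ)/18) := by
              apply Real.exp_le_exp.mpr
              have : Real.log (200 * 3^n) ≤ ((2:ℝ)^(n-d))/18 := by linarith
              linarith [hmono]
      rw [show (-((Cs ρ).card : ℝ)/18) = -(((Cs ρ).card : ℝ)/18) by ring, Real.exp_neg,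
        one_div]
      exact inv_anti₀ h200 hlog
    have hchoose_nonneg : (0:ℝ) ≤ ((Fintype.card (Cube n)).choose K : ℝ) := Nat.cast_nonneg _
    calc ((𝒮.filter (badP ρ)).card : ℝ)
        ≤ 2 * Real.exp (-((Cs ρ).card:ℝ)/18) * ((Fintype.card (Cube n)).choose K) := hcount
      _ ≤ 2 * (1/(200 * 3^n)) * ((Fintype.card (Cube n)).choose K) := by
          apply mul_le_mul_of_nonneg_right ?_ hchoose_nonneg
          linarith
      _ = (1/(100 * 3^n)) * ((Fintype.card (Cube n)).choose K) := by
          congr 1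
          field_simp
          ring
  -- step 3 : put together
  have hBadcard : (Bad.card : ℝ) ≤ (1/100) * ((Fintype.card (Cube n)).choose K : ℝ) := by
    have h1 : Bad.card ≤ ∑ ρ ∈ R, (𝒮.filter (badP ρ)).card :=
      le_trans (Finset.card_le_card hincl) (Finset.card_biUnion_le)
    have h2 : (Bad.card : ℝ) ≤ ∑ ρ ∈ R, ((𝒮.filter (badP ρ)).card : ℝ) := by
      calc (Bad.card : ℝ) ≤ ((∑ ρ ∈ R, (𝒮.filter (badP ρ)).card : ℕ) : ℝ) := Nat.cast_le.mpr h1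
        _ = ∑ ρ ∈ R, ((𝒮.filter (badP ρ)).card : ℝ) := by push_cast; rfl
    calc (Bad.card : ℝ) ≤ ∑ ρ ∈ R, ((𝒮.filter (badP ρ)).card : ℝ) := h2
      _ ≤ ∑ _ρ ∈ R, (1/(100 * 3^n)) * ((Fintype.card (Cube n)).choose K : ℝ) :=
          Finset.sum_le_sum hper
      _ = (R.card : ℝ) * ((1/(100 * 3^n)) * ((Fintype.card (Cube n)).choose K : ℝ)) := by
          rw [Finset.sum_const, nsmul_eq_mul]
      _ ≤ (3:ℝ)^n * ((1/(100 * 3^n)) * ((Fintype.card (Cube n)).choose K : ℝ)) := by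
          apply mul_le_mul_of_nonneg_right hRcard (by positivity)
      _ = (1/100) * ((Fintype.card (Cube n)).choose K : ℝ) := by
          have h3 : (3:ℝ)^n ≠ 0 := by positivity
          field_simp
  have h𝒮card : (𝒮.card : ℝ) = ((Fintype.card (Cube n)).choose K : ℝ) := by
    rw [h𝒮, Finset.card_powersetCard, Finset.card_univ]
  have h𝒮pos : (0:ℝ) < (𝒮.card : ℝ) := by
    rw [h𝒮card]
    have : 0 < (Fintype.card (Cube n)).choose K := Nat.choose_pos (by omega)
    exact_mod_cast this
  rw [div_le_div_iff₀ h𝒮pos (by norm_num : (0:ℝ) < 100)]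
  rw [h𝒮card] at *
  linarith
end

section
/- Let ε ≥ 0, let ε_a ∈ (0,1), let k ≥ 1 be an integer, and let 1 = r₁ ≥ r₂ ≥ … ≥ r_k ≥ r_{k+1} ≥ 0 be reals with r_k ≥ ε_a and r_{k+1} ≤ ε_a. Let ℓ₁, …, ℓ_k ∈ [0,1] satisfy ℓ_i ≤ 2ε/r_i for every i ∈ [k]. Then r_{k+1} + Σ_{i=1}^{k} (r_i − r_{i+1})·ℓ_i ≤ ε_a + 2ε·(1 + ln(1/ε_a)). -/
lemma findsubcube_tele_aux (g : ℕ → ℝ) :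
    ∀ k : ℕ, ∑ i ∈ Finset.Icc 1 k, (g i - g (i + 1)) = g 1 - g (k + 1) := by
  intro k
  induction k with
  | zero => simp
  | succ n ih =>
    rw [Finset.sum_Icc_succ_top (by omega), ih]
    ring

lemma findsubcube_step_aux (ε a b l : ℝ) (hε : 0 ≤ ε) (hb : 0 < b) (hab : b ≤ a)
    (hl0 : 0 ≤ l) (hl : l ≤ 2 * ε / a) :
    (a - b) * l ≤ 2 * ε * (Real.log a - Real.log b) := by
  have ha : 0 < a := lt_of_lt_of_le hb hab
  have h1 : (a - b) * l ≤ (a - b) * (2 * ε / a) :=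
    mul_le_mul_of_nonneg_left hl (by linarith)
  have h2 : Real.log (b / a) ≤ b / a - 1 := Real.log_le_sub_one_of_pos (by positivity)
  rw [Real.log_div hb.ne' ha.ne'] at h2
  have h3 : (a - b) * (2 * ε / a) = 2 * ε * (1 - b / a) := by
    field_simp
  have h4 : 2 * ε * (1 - b / a) ≤ 2 * ε * (Real.log a - Real.log b) :=
    mul_le_mul_of_nonneg_left (by linarith) (by linarith)
  linarith [h1, h3 ▸ h1]

/-- the telescoping error bound in the analysis of `FindSubcube`. -/
theorem findsubcube_telescoping_bound
    (ε εa : ℝ) (hε : 0 ≤ ε) (hεa0 : 0 < εa) (hεa1 : εa < 1)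
    (k : ℕ) (hk : 1 ≤ k) (r ℓ : ℕ → ℝ)
    (hr1 : r 1 = 1)
    (hmono : ∀ i, 1 ≤ i → i ≤ k → r (i + 1) ≤ r i)
    (hrpos : 0 ≤ r (k + 1))
    (hrk : εa ≤ r k) (hrk1 : r (k + 1) ≤ εa)
    (hℓ : ∀ i, 1 ≤ i → i ≤ k → 0 ≤ ℓ i ∧ ℓ i ≤ 1 ∧ ℓ i ≤ 2 * ε / r i) :
    r (k + 1) + ∑ i ∈ Finset.Icc 1 k, (r i - r (i + 1)) * ℓ i ≤
      εa + 2 * ε * (1 + Real.log (1 / εa)) := by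
  -- r is at least εa on [1, k]
  have hge : ∀ i, 1 ≤ i → i ≤ k → εa ≤ r i := by
    intro i h1 h2
    have key : ∀ j, i + j ≤ k → r (i + j) ≤ r i := by
      intro j
      induction j with
      | zero => intro _; simp
      | succ n ih =>
        intro h
        have ha := hmono (i + n) (by omega) (by omega)
        have hb := ih (by omega)
        have he : i + (n + 1) = (i + n) + 1 := by omega
        rw [he]
        linarith
    have hk' := key (k - i) (by omega)
    have he : i + (k - i) = k := by omega
    rw [he] at hk'
    linarith
  set s : ℕ → ℝ := fun i => if i = k + 1 then εa else r i with hs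
  set g : ℕ → ℝ := fun i => 2 * ε * Real.log (s i) with hg
  -- per-term bound
  have hterm : ∀ i ∈ Finset.Icc 1 k,
      (r i - r (i + 1)) * ℓ i ≤
        (g i - g (i + 1)) + (if i = k then εa - r (k + 1) else 0) := by
    intro i hi
    rw [Finset.mem_Icc] at hi
    obtain ⟨h1, h2⟩ := hi
    obtain ⟨hl0, hl1, hl2⟩ := hℓ i h1 h2
    have hsi : s i = r i := by simp [hs]; intro h; omega
    by_cases hik : i = k
    · subst hik
      have hsk1 : s (i + 1) = εa := by simp [hs]
      have hstep : (r i - εa) * ℓ i ≤ 2 * ε * (Real.log (r i) - Real.log εa) :=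
        findsubcube_step_aux ε (r i) εa (ℓ i) hε hεa0 (hge i h1 h2) hl0 hl2
      have hrest : (εa - r (i + 1)) * ℓ i ≤ (εa - r (i + 1)) * 1 :=
        mul_le_mul_of_nonneg_left hl1 (by linarith)
      simp only [if_pos rfl, ite_true, hg, hsi, hsk1]
      nlinarith [hstep, hrest]
    · have hsk1 : s (i + 1) = r (i + 1) := by simp [hs]; intro h; omega
      have hpos : εa ≤ r (i + 1) := hge (i + 1) (by omega) (by omega)
      have hmon := hmono i h1 h2
      have hstep : (r i - r (i + 1)) * ℓ i ≤
          2 * ε * (Real.log (r i) - Real.log (r (i + 1))) :=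
        findsubcube_step_aux ε (r i) (r (i + 1)) (ℓ i) hε (by linarith) hmon hl0 hl2
      simp only [if_neg hik, hg, hsi, hsk1, add_zero]
      linarith
  have hsum := Finset.sum_le_sum hterm
  rw [Finset.sum_add_distrib, findsubcube_tele_aux g k] at hsum
  have hδ : ∑ i ∈ Finset.Icc 1 k, (if i = k then εa - r (k + 1) else 0)
      = εa - r (k + 1) := by
    rw [Finset.sum_ite_eq' (Finset.Icc 1 k) k fun _ => εa - r (k + 1)]
    simp [Finset.mem_Icc, hk]
  rw [hδ] at hsum
  have hg1 : g 1 = 0 := by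
    have : s 1 = r 1 := by simp [hs]; intro h; omega
    simp [hg, this, hr1]
  have hgk1 : g (k + 1) = 2 * ε * Real.log εa := by simp [hg, hs]
  have hlog : Real.log (1 / εa) = -Real.log εa := by
    rw [one_div, Real.log_inv]
  rw [hg1, hgk1] at hsum
  have h2ε : 0 ≤ 2 * ε := by linarith
  rw [hlog]
  nlinarith [hsum, mul_nonneg h2ε (le_refl (0:ℝ))]
end

section
/- Let D and D' be probability distributions on a finite set X with d_TV(D, D') ≤ η, and let X = ℓ₁ ⊔ … ⊔ ℓ_k be a partition of X. Then Σ_{j : D'(ℓ_j) > 0} D'(ℓ_j) · d_TV(D|_{ℓ_j}, D'|_{ℓ_j}) ≤ 2η, where D|_ℓ denotes D conditioned on the event ℓ, and by convention d_TV(D|_ℓ, D'|_ℓ) := 1 when D(ℓ) = 0 < D'(ℓ). -/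
open scoped Classical

/-- TV distance between the conditionals of `D` and `D'` on the event `s`,
with the convention that it equals `1` when `D(s) = 0` (and `D'(s) > 0`). -/
noncomputable def condTV {X : Type*} [Fintype X] (D D' : X → ℝ) (s : Finset X) : ℝ :=
  if (∑ x ∈ s, D x) = 0 then 1
  else (1 / 2 : ℝ) * ∑ x ∈ s, |D x / (∑ x' ∈ s, D x') - D' x / (∑ x' ∈ s, D' x')|

lemma piece_bound {X : Type*} [Fintype X] (D D' : X → ℝ)
    (hD0 : ∀ x, 0 ≤ D x) (hD'0 : ∀ x, 0 ≤ D' x) (s : Finset X)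
    (hb : 0 < ∑ x ∈ s, D' x) :
    (∑ x ∈ s, D' x) * condTV D D' s ≤ ∑ x ∈ s, |D x - D' x| := by
  set a := ∑ x ∈ s, D x with ha_def
  set b := ∑ x ∈ s, D' x with hb_def
  have ha0 : 0 ≤ a := Finset.sum_nonneg fun x _ => hD0 x
  by_cases ha : a = 0
  · have hzero : ∀ x ∈ s, D x = 0 :=
      (Finset.sum_eq_zero_iff_of_nonneg (fun x _ => hD0 x)).mp ha
    have hc : condTV D D' s = 1 := by simp [condTV, ← ha_def, ha]
    rw [hc, mul_one, hb_def]
    apply le_of_eq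
    apply Finset.sum_congr rfl
    intro x hx
    rw [hzero x hx, zero_sub, abs_neg, abs_of_nonneg (hD'0 x)]
  · have hapos : 0 < a := lt_of_le_of_ne ha0 (Ne.symm ha)
    have hc : condTV D D' s = (1 / 2 : ℝ) * ∑ x ∈ s, |D x / a - D' x / b| := by
      simp [condTV, ← ha_def, ← hb_def, ha]
    rw [hc]
    have key : b * ∑ x ∈ s, |D x / a - D' x / b|
        ≤ 2 * ∑ x ∈ s, |D x - D' x| := by
      rw [Finset.mul_sum]
      have hterm : ∀ x ∈ s, b * |D x / a - D' x / b|
          ≤ |D x - D' x| + D x * |b / a - 1| := by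
        intro x hx
        have : b * |D x / a - D' x / b| = |(b / a) * D x - D' x| := by
          rw [show (b / a) * D x - D' x = b * (D x / a - D' x / b) by
              field_simp, abs_mul, abs_of_pos hb]
        rw [this]
        calc |(b / a) * D x - D' x|
            = |(D x - D' x) + ((b / a) * D x - D x)| := by ring_nf
          _ ≤ |D x - D' x| + |(b / a) * D x - D x| := abs_add_le _ _
          _ = |D x - D' x| + D x * |b / a - 1| := by
              rw [show (b / a) * D x - D x = (b / a - 1) * D x by ring,
                abs_mul, abs_of_nonneg (hD0 x), mul_comm]
      calc ∑ x ∈ s, b * |D x / a - D' x / b|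
          ≤ ∑ x ∈ s, (|D x - D' x| + D x * |b / a - 1|) :=
            Finset.sum_le_sum hterm
        _ = (∑ x ∈ s, |D x - D' x|) + a * |b / a - 1| := by
            rw [Finset.sum_add_distrib, ← Finset.sum_mul, ← ha_def]
        _ = (∑ x ∈ s, |D x - D' x|) + |b - a| := by
            congr 1
            rw [show b - a = a * (b / a - 1) by field_simp, abs_mul,
              abs_of_pos hapos]
        _ ≤ (∑ x ∈ s, |D x - D' x|) + ∑ x ∈ s, |D x - D' x| := by
            gcongr
            rw [ha_def, hb_def, ← Finset.sum_sub_distrib]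
            calc |∑ x ∈ s, (D' x - D x)| ≤ ∑ x ∈ s, |D' x - D x| :=
                  Finset.abs_sum_le_sum_abs _ _
              _ = ∑ x ∈ s, |D x - D' x| := by
                  apply Finset.sum_congr rfl; intro x _; rw [abs_sub_comm]
        _ = 2 * ∑ x ∈ s, |D x - D' x| := by ring
    nlinarith [key]

/-- total variation distance distributes over the pieces of a partition:
`Σ_{j : D'(ℓ_j) > 0} D'(ℓ_j) · d_TV(D|_{ℓ_j}, D'|_{ℓ_j}) ≤ 2η`. -/
theorem tv_distributes_over_partition
    {X : Type*} [Fintype X] (η : ℝ)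
    (D D' : X → ℝ)
    (hD0 : ∀ x, 0 ≤ D x) (hD1 : ∑ x : X, D x = 1)
    (hD'0 : ∀ x, 0 ≤ D' x) (hD'1 : ∑ x : X, D' x = 1)
    (hTV : (1 / 2 : ℝ) * (∑ x : X, |D x - D' x|) ≤ η)
    (k : ℕ) (ℓ : Fin k → Finset X)
    (hdisj : ∀ i j : Fin k, i ≠ j → Disjoint (ℓ i) (ℓ j))
    (hcover : ∀ x : X, ∃ j : Fin k, x ∈ ℓ j) :
    ∑ j ∈ Finset.univ.filter (fun j : Fin k => 0 < ∑ x ∈ ℓ j, D' x),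
        (∑ x ∈ ℓ j, D' x) * condTV D D' (ℓ j) ≤ 2 * η := by
  have step1 : ∑ j ∈ Finset.univ.filter (fun j : Fin k => 0 < ∑ x ∈ ℓ j, D' x),
      (∑ x ∈ ℓ j, D' x) * condTV D D' (ℓ j)
      ≤ ∑ j ∈ Finset.univ.filter (fun j : Fin k => 0 < ∑ x ∈ ℓ j, D' x),
        ∑ x ∈ ℓ j, |D x - D' x| := by
    apply Finset.sum_le_sum
    intro j hj
    exact piece_bound D D' hD0 hD'0 (ℓ j) (Finset.mem_filter.mp hj).2
  have step2 : ∑ j ∈ Finset.univ.filter (fun j : Fin k => 0 < ∑ x ∈ ℓ j, D' x),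
      ∑ x ∈ ℓ j, |D x - D' x|
      ≤ ∑ j : Fin k, ∑ x ∈ ℓ j, |D x - D' x| := by
    apply Finset.sum_le_sum_of_subset_of_nonneg (Finset.filter_subset _ _)
    intro j _ _
    exact Finset.sum_nonneg fun x _ => abs_nonneg _
  have hU : Finset.univ.biUnion ℓ = (Finset.univ : Finset X) := by
    ext x; simpa using hcover x
  have step3 : ∑ j : Fin k, ∑ x ∈ ℓ j, |D x - D' x| = ∑ x : X, |D x - D' x| := by
    rw [← Finset.sum_biUnion (fun i _ j _ hij => hdisj i j hij), hU]
  linarith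
end

section
/- Let X be a finite set with |X| = N even, and let 1 ≤ m ≤ N/2. For every function A : X^m → [0,1]: if S is drawn uniformly at random among all subsets of X of size N/2 and then, conditionally on S, y₁, …, y_m are drawn i.i.d. uniform on S, then E_{S,y}[A(y₁,…,y_m)] ≤ m(m−1)/N + E[A(y₁,…,y_m)], where the last expectation is over a uniformly random m-tuple of distinct elements of X. -/
open Finset

lemma powEq (m : ℕ) (x : ℝ) :
    (m : ℝ) * ((m : ℝ) - 1) / 2 * (x * x ^ (m - 1))
      = (m : ℝ) * ((m : ℝ) - 1) / 2 * x ^ m := by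
  cases m with
  | zero => norm_num
  | succ k =>
    have : (k+1) - 1 = k := rfl
    rw [this, pow_succ]; ring

lemma birthdayNat (n : ℕ) : ∀ m : ℕ, m ≤ n →
    (n : ℝ) ^ m - (n.descFactorial m : ℝ) ≤ (m : ℝ) * ((m : ℝ) - 1) / 2 * (n : ℝ) ^ (m - 1) := by
  intro m
  induction m with
  | zero => intro _; norm_num
  | succ k ih =>
    intro hk
    have hkn : k ≤ n := le_of_lt hk
    have ih' := ih hkn
    have hd : (n.descFactorial k : ℝ) ≤ (n : ℝ) ^ k := by
      exact_mod_cast Nat.descFactorial_le_pow n k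
    have hn0 : (0 : ℝ) ≤ (n : ℝ) := Nat.cast_nonneg n
    have hk0 : (0 : ℝ) ≤ (k : ℝ) := Nat.cast_nonneg k
    have hdesc : (n.descFactorial (k + 1) : ℝ) = ((n : ℝ) - k) * (n.descFactorial k : ℝ) := by
      rw [Nat.descFactorial_succ]; push_cast [Nat.cast_sub hkn]; ring
    have h1 : (n : ℝ) * ((n : ℝ) ^ k - (n.descFactorial k : ℝ))
        ≤ (n : ℝ) * ((k : ℝ) * ((k : ℝ) - 1) / 2 * (n : ℝ) ^ (k - 1)) :=
      mul_le_mul_of_nonneg_left ih' hn0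
    have h2 : (n : ℝ) * ((k : ℝ) * ((k : ℝ) - 1) / 2 * (n : ℝ) ^ (k - 1))
        = (k : ℝ) * ((k : ℝ) - 1) / 2 * (n : ℝ) ^ k := by
      rw [← powEq k (n : ℝ)]; ring
    have h3 : (k : ℝ) * (n.descFactorial k : ℝ) ≤ (k : ℝ) * (n : ℝ) ^ k :=
      mul_le_mul_of_nonneg_left hd hk0
    have hps : (n : ℝ) ^ (k + 1) = (n : ℝ) * (n : ℝ) ^ k := by rw [pow_succ]; ring
    rw [hdesc, hps]
    have hms : (k + 1) - 1 = k := rfl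
    rw [hms]
    push_cast
    nlinarith [h1, h2, h3]

lemma countInj {X : Type*} [Fintype X] [DecidableEq X] (m : ℕ) (S : Finset X) :
    ((Finset.univ : Finset (Fin m → X)).filter
        (fun y => Function.Injective y ∧ ∀ i, y i ∈ S)).card
      = S.card.descFactorial m := by
  rw [← Fintype.card_subtype]
  have e : {y : Fin m → X // Function.Injective y ∧ ∀ i, y i ∈ S} ≃ (Fin m ↪ {x // x ∈ S}) :=
    { toFun := fun y => ⟨fun i => ⟨y.1 i, y.2.2 i⟩,
        fun a b h => y.2.1 (congrArg Subtype.val h)⟩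
      invFun := fun f => ⟨fun i => (f i : X),
        ⟨fun a b h => f.injective (Subtype.ext h), fun i => (f i).2⟩⟩
      left_inv := fun y => rfl
      right_inv := fun f => by ext i; rfl }
  rw [Fintype.card_congr e, Fintype.card_embedding_eq, Fintype.card_fin, Fintype.card_coe]

lemma countSuper {X : Type*} [Fintype X] [DecidableEq X] (T : Finset X) (k : ℕ)
    (hk : T.card ≤ k) :
    (((Finset.univ : Finset X).powersetCard k).filter (fun S => T ⊆ S)).card
      = (Fintype.card X - T.card).choose (k - T.card) := by
  have h1 : ((Finset.univ \ T).powersetCard (k - T.card)).card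
      = (Fintype.card X - T.card).choose (k - T.card) := by
    rw [Finset.card_powersetCard, Finset.card_sdiff_of_subset (Finset.subset_univ T), Finset.card_univ]
  rw [← h1]
  apply Finset.card_nbij' (fun S => S \ T) (fun S' => S' ∪ T)
  · intro S hS
    simp only [Finset.mem_coe, Finset.mem_filter, Finset.mem_powersetCard] at hS
    obtain ⟨⟨_, hcard⟩, hTS⟩ := hS
    rw [Finset.mem_coe, Finset.mem_powersetCard]
    exact ⟨Finset.sdiff_subset_sdiff (Finset.subset_univ S) le_rfl,
      by rw [Finset.card_sdiff_of_subset hTS, hcard]⟩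
  · intro S' hS'
    rw [Finset.mem_coe, Finset.mem_powersetCard] at hS'
    obtain ⟨hsub, hcard⟩ := hS'
    have hdisj : Disjoint S' T :=
      Finset.disjoint_of_subset_left hsub Finset.sdiff_disjoint
    simp only [Finset.mem_coe, Finset.mem_filter, Finset.mem_powersetCard]
    refine ⟨⟨Finset.subset_univ _, ?_⟩, Finset.subset_union_right⟩
    rw [Finset.card_union_of_disjoint hdisj, hcard, Nat.sub_add_cancel hk]
  · intro S hS
    simp only [Finset.mem_coe, Finset.mem_filter] at hS
    dsimp only
    rw [Finset.sdiff_union_self_eq_union, Finset.union_eq_left.mpr hS.2]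
  · intro S' hS'
    rw [Finset.mem_coe, Finset.mem_powersetCard] at hS'
    exact Finset.union_sdiff_cancel_right
      (Finset.disjoint_of_subset_left hS'.1 Finset.sdiff_disjoint)

/-- drawing a uniformly random half-subset `S` of `X` and then `m` i.i.d.
uniform samples from `S`, the expectation of `A` is at most `m(m−1)/N` plus its expectation
under `m` uniform draws without replacement from all of `X`. -/
theorem half_subset_iid_vs_without_replacement
    {X : Type*} [Fintype X] [DecidableEq X] (N m : ℕ)
    (hN : Fintype.card X = N) (hNeven : Even N) (hm1 : 1 ≤ m) (hm : m ≤ N / 2)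
    (A : (Fin m → X) → ℝ) (hA : ∀ y, 0 ≤ A y ∧ A y ≤ 1) :
    ∑ S ∈ (Finset.univ : Finset X).powersetCard (N / 2),
        ((((Finset.univ : Finset X).powersetCard (N / 2)).card : ℝ))⁻¹ *
          ∑ y : Fin m → X,
            (∏ i : Fin m, (if y i ∈ S then (((N / 2 : ℕ) : ℝ))⁻¹ else 0)) * A y ≤
      (m : ℝ) * ((m : ℝ) - 1) / N +
        ∑ y : Fin m → X,
          (if Function.Injective y then ((Nat.descFactorial N m : ℝ))⁻¹ else 0) * A y := by
  classical
  set n := N / 2 with hn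
  set P := (Finset.univ : Finset X).powersetCard n with hP
  set K := P.card with hK
  have hNcard : (Finset.univ : Finset X).card = N := by rw [Finset.card_univ, hN]
  have h2n : 2 * n = N := Nat.two_mul_div_two_of_even hNeven
  have hmn : m ≤ n := hm
  have hn1 : 1 ≤ n := le_trans hm1 hmn
  have hnN : n ≤ N := Nat.div_le_self N 2
  have hmN : m ≤ N := hmn.trans hnN
  have hKpos : 0 < K :=
    Finset.card_pos.mpr (Finset.powersetCard_nonempty.mpr (by rw [hNcard]; exact hnN))
  have hKne : ((K : ℝ)) ≠ 0 := Nat.cast_ne_zero.mpr hKpos.ne'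
  have hnpos : (0 : ℝ) < (n : ℝ) := by exact_mod_cast hn1
  have hnne : ((n : ℝ)) ≠ 0 := ne_of_gt hnpos
  have hcardS : ∀ S ∈ P, S.card = n := fun S hS => Finset.mem_powersetCard_univ.mp hS
  have hD0 : 0 < Nat.descFactorial N m := by
    rcases Nat.eq_zero_or_pos (Nat.descFactorial N m) with h | h
    · exact absurd (Nat.descFactorial_eq_zero_iff_lt.mp h) (not_lt.mpr hmN)
    · exact h
  set D := ((Nat.descFactorial N m : ℕ) : ℝ) with hDdef
  have hD : (0 : ℝ) < D := by rw [hDdef]; exact_mod_cast hD0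
  -- rewrite the product as (n⁻¹)^m times an indicator
  have prodEq : ∀ (S : Finset X) (y : Fin m → X),
      (∏ i : Fin m, (if y i ∈ S then ((n : ℝ))⁻¹ else 0))
        = ((n : ℝ))⁻¹ ^ m * (if ∀ i, y i ∈ S then (1 : ℝ) else 0) := by
    intro S y
    have h1 : ∀ i : Fin m, (if y i ∈ S then ((n : ℝ))⁻¹ else 0)
        = ((n : ℝ))⁻¹ * (if y i ∈ S then (1 : ℝ) else 0) := by
      intro i; split <;> simp
    rw [Finset.prod_congr rfl (fun i _ => h1 i), Finset.prod_mul_distrib,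
      Finset.prod_const, Finset.prod_boole]
    simp [Finset.card_univ]
  -- sum of the indicator over all tuples
  have sumAll : ∀ S : Finset X,
      (∑ y : Fin m → X, (if ∀ i, y i ∈ S then (1 : ℝ) else 0)) = (S.card : ℝ) ^ m := by
    intro S
    have h1 : ∀ y : Fin m → X, (if ∀ i, y i ∈ S then (1 : ℝ) else 0)
        = ∏ i : Fin m, (if y i ∈ S then (1 : ℝ) else 0) := by
      intro y; rw [Finset.prod_boole]; simp
    rw [Finset.sum_congr rfl (fun y _ => h1 y), ← Fintype.sum_pow (fun x => if x ∈ S then (1:ℝ) else 0) m]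
    congr 1
    rw [Finset.sum_boole]
    congr 1
    simp [Finset.filter_mem_eq_inter]
  -- sum of the indicator over injective tuples
  have sumInj : ∀ S : Finset X,
      (∑ y ∈ (Finset.univ : Finset (Fin m → X)).filter (fun y => Function.Injective y),
        (if ∀ i, y i ∈ S then (1 : ℝ) else 0)) = ((S.card.descFactorial m : ℕ) : ℝ) := by
    intro S
    rw [Finset.sum_filter]
    have h1 : ∀ y : Fin m → X,
        (if Function.Injective y then (if ∀ i, y i ∈ S then (1 : ℝ) else 0) else 0)
          = (if Function.Injective y ∧ ∀ i, y i ∈ S then (1 : ℝ) else 0) := by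
      intro y; rw [ite_and]
    rw [Finset.sum_congr rfl (fun y _ => h1 y), Finset.sum_boole, countInj]
  -- sum over S of the indicator, for injective y
  have sumSuper : ∀ y : Fin m → X, Function.Injective y →
      (∑ S ∈ P, (if ∀ i, y i ∈ S then (1 : ℝ) else 0))
        = (((N - m).choose (n - m) : ℕ) : ℝ) := by
    intro y hy
    have h1 : ∀ S ∈ P, (if ∀ i, y i ∈ S then (1 : ℝ) else 0)
        = (if Finset.image y Finset.univ ⊆ S then (1 : ℝ) else 0) := by
      intro S _
      congr 1
      simp [Finset.image_subset_iff]
    rw [Finset.sum_congr rfl h1, Finset.sum_boole]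
    have hT : (Finset.image y Finset.univ).card = m := by
      rw [Finset.card_image_of_injective _ hy, Finset.card_univ, Fintype.card_fin]
    rw [hP]
    rw [countSuper _ _ (by rw [hT]; exact hmn), hT, hN]
  -- abbreviations
  have hinv1 : ((n : ℝ))⁻¹ ^ m * (n : ℝ) ^ m = 1 := by
    rw [← mul_pow, inv_mul_cancel₀ hnne, one_pow]
  set C := (((N - m).choose (n - m) : ℕ) : ℝ) with hC
  set c0 := (K : ℝ)⁻¹ * ((n : ℝ))⁻¹ ^ m * C with hc0def
  have hc0nn : 0 ≤ c0 := by rw [hc0def, hC]; positivity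
  have indnn : ∀ (S : Finset X) (y : Fin m → X),
      (0 : ℝ) ≤ (if ∀ i, y i ∈ S then (1 : ℝ) else 0) := by
    intro S y; split <;> norm_num
  -- count of injective tuples
  have hcount : ((((Finset.univ : Finset (Fin m → X)).filter
      (fun y => Function.Injective y)).card : ℝ)) = D := by
    have h2 := countInj m (Finset.univ : Finset X)
    rw [Finset.card_univ, hN] at h2
    have h3 : ((Finset.univ : Finset (Fin m → X)).filter
        (fun y => Function.Injective y ∧ ∀ i, y i ∈ (Finset.univ : Finset X)))
        = (Finset.univ : Finset (Fin m → X)).filter (fun y => Function.Injective y) := by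
      apply Finset.filter_congr; intro y _; simp
    rw [hDdef, ← h2, h3]
  -- constancy of the S-sum for injective y
  have constInj : ∀ y ∈ (Finset.univ : Finset (Fin m → X)).filter
      (fun y => Function.Injective y),
      (∑ S ∈ P, ((K : ℝ)⁻¹ * ((n : ℝ))⁻¹ ^ m) * (if ∀ i, y i ∈ S then (1 : ℝ) else 0))
        = c0 := by
    intro y hy
    rw [← Finset.mul_sum, sumSuper y (Finset.mem_filter.mp hy).2, hc0def]
  -- total mass is 1
  have hone : (∑ S ∈ P, ((K : ℝ)⁻¹ * ((n : ℝ))⁻¹ ^ m)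
      * (∑ y : Fin m → X, (if ∀ i, y i ∈ S then (1 : ℝ) else 0))) = 1 := by
    have h1 : ∀ S ∈ P, ((K : ℝ)⁻¹ * ((n : ℝ))⁻¹ ^ m)
        * (∑ y : Fin m → X, (if ∀ i, y i ∈ S then (1 : ℝ) else 0)) = (K : ℝ)⁻¹ := by
      intro S hS
      rw [sumAll S, hcardS S hS, mul_assoc, hinv1, mul_one]
    rw [Finset.sum_congr rfl h1, Finset.sum_const, nsmul_eq_mul, ← hK,
      mul_inv_cancel₀ hKne]
  -- c0 * D ≤ 1
  have hc0D : D * c0 ≤ 1 := by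
    have step : D * c0
        = ∑ y ∈ (Finset.univ : Finset (Fin m → X)).filter (fun y => Function.Injective y),
            (∑ S ∈ P, ((K : ℝ)⁻¹ * ((n : ℝ))⁻¹ ^ m) * (if ∀ i, y i ∈ S then (1 : ℝ) else 0)) := by
      rw [Finset.sum_congr rfl constInj, Finset.sum_const, nsmul_eq_mul, hcount]
    rw [step]
    calc ∑ y ∈ (Finset.univ : Finset (Fin m → X)).filter (fun y => Function.Injective y),
            (∑ S ∈ P, ((K : ℝ)⁻¹ * ((n : ℝ))⁻¹ ^ m) * (if ∀ i, y i ∈ S then (1 : ℝ) else 0))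
        ≤ ∑ y : Fin m → X,
            (∑ S ∈ P, ((K : ℝ)⁻¹ * ((n : ℝ))⁻¹ ^ m) * (if ∀ i, y i ∈ S then (1 : ℝ) else 0)) := by
          apply Finset.sum_le_sum_of_subset_of_nonneg (Finset.filter_subset _ _)
          intro y _ _
          apply Finset.sum_nonneg
          intro S _
          exact mul_nonneg (by positivity) (indnn S y)
      _ = ∑ S ∈ P, ((K : ℝ)⁻¹ * ((n : ℝ))⁻¹ ^ m)
            * (∑ y : Fin m → X, (if ∀ i, y i ∈ S then (1 : ℝ) else 0)) := by
          rw [Finset.sum_comm]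
          exact Finset.sum_congr rfl fun S _ => (Finset.mul_sum _ _ _).symm
      _ = 1 := hone
  have hc0le : c0 ≤ D⁻¹ := by
    rw [← one_div]
    rw [le_div_iff₀ hD]
    rw [mul_comm] at hc0D
    exact hc0D
  -- split the inner sum
  have step0 : ∀ S ∈ P,
      (∑ y : Fin m → X, (∏ i : Fin m, (if y i ∈ S then ((n : ℝ))⁻¹ else 0)) * A y)
        = (∑ y ∈ (Finset.univ : Finset (Fin m → X)).filter (fun y => Function.Injective y),
            (((n : ℝ))⁻¹ ^ m * (if ∀ i, y i ∈ S then (1 : ℝ) else 0)) * A y)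
          + (∑ y ∈ (Finset.univ : Finset (Fin m → X)).filter (fun y => ¬ Function.Injective y),
            (((n : ℝ))⁻¹ ^ m * (if ∀ i, y i ∈ S then (1 : ℝ) else 0)) * A y) := by
    intro S _
    rw [Finset.sum_congr rfl (fun y _ => by rw [prodEq S y])]
    exact (Finset.sum_filter_add_sum_filter_not _ _ _).symm
  -- the injective part equals ∑ c0 * A y
  have partInj : (∑ S ∈ P, (K : ℝ)⁻¹
      * ∑ y ∈ (Finset.univ : Finset (Fin m → X)).filter (fun y => Function.Injective y),
          (((n : ℝ))⁻¹ ^ m * (if ∀ i, y i ∈ S then (1 : ℝ) else 0)) * A y)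
      = ∑ y ∈ (Finset.univ : Finset (Fin m → X)).filter (fun y => Function.Injective y),
          c0 * A y := by
    calc (∑ S ∈ P, (K : ℝ)⁻¹
        * ∑ y ∈ (Finset.univ : Finset (Fin m → X)).filter (fun y => Function.Injective y),
            (((n : ℝ))⁻¹ ^ m * (if ∀ i, y i ∈ S then (1 : ℝ) else 0)) * A y)
        = ∑ S ∈ P, ∑ y ∈ (Finset.univ : Finset (Fin m → X)).filter
            (fun y => Function.Injective y),
            (K : ℝ)⁻¹ * ((((n : ℝ))⁻¹ ^ m * (if ∀ i, y i ∈ S then (1 : ℝ) else 0)) * A y) :=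
          Finset.sum_congr rfl fun S _ => Finset.mul_sum _ _ _
      _ = ∑ y ∈ (Finset.univ : Finset (Fin m → X)).filter (fun y => Function.Injective y),
            ∑ S ∈ P,
            (K : ℝ)⁻¹ * ((((n : ℝ))⁻¹ ^ m * (if ∀ i, y i ∈ S then (1 : ℝ) else 0)) * A y) :=
          Finset.sum_comm
      _ = ∑ y ∈ (Finset.univ : Finset (Fin m → X)).filter (fun y => Function.Injective y),
            c0 * A y := by
          apply Finset.sum_congr rfl
          intro y hy
          have h1 : ∀ S ∈ P, (K : ℝ)⁻¹
              * ((((n : ℝ))⁻¹ ^ m * (if ∀ i, y i ∈ S then (1 : ℝ) else 0)) * A y)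
              = (((K : ℝ)⁻¹ * ((n : ℝ))⁻¹ ^ m) * (if ∀ i, y i ∈ S then (1 : ℝ) else 0)) * A y := by
            intro S _; ring
          rw [Finset.sum_congr rfl h1, ← Finset.sum_mul, constInj y hy]
  -- bound on the non-injective part for a fixed S
  have hNonS : ∀ S ∈ P,
      (∑ y ∈ (Finset.univ : Finset (Fin m → X)).filter (fun y => ¬ Function.Injective y),
          (((n : ℝ))⁻¹ ^ m * (if ∀ i, y i ∈ S then (1 : ℝ) else 0)) * A y)
        ≤ (m : ℝ) * ((m : ℝ) - 1) / N := by
    intro S hS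
    have h1 : (∑ y ∈ (Finset.univ : Finset (Fin m → X)).filter (fun y => ¬ Function.Injective y),
        (((n : ℝ))⁻¹ ^ m * (if ∀ i, y i ∈ S then (1 : ℝ) else 0)) * A y)
        ≤ ∑ y ∈ (Finset.univ : Finset (Fin m → X)).filter (fun y => ¬ Function.Injective y),
          ((n : ℝ))⁻¹ ^ m * (if ∀ i, y i ∈ S then (1 : ℝ) else 0) := by
      apply Finset.sum_le_sum
      intro y _
      exact mul_le_of_le_one_right (mul_nonneg (by positivity) (indnn S y)) (hA y).2
    have h2 : (∑ y ∈ (Finset.univ : Finset (Fin m → X)).filter (fun y => ¬ Function.Injective y),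
        ((n : ℝ))⁻¹ ^ m * (if ∀ i, y i ∈ S then (1 : ℝ) else 0))
        = (∑ y : Fin m → X, ((n : ℝ))⁻¹ ^ m * (if ∀ i, y i ∈ S then (1 : ℝ) else 0))
          - ∑ y ∈ (Finset.univ : Finset (Fin m → X)).filter (fun y => Function.Injective y),
            ((n : ℝ))⁻¹ ^ m * (if ∀ i, y i ∈ S then (1 : ℝ) else 0) := by
      rw [eq_sub_iff_add_eq, add_comm]
      exact Finset.sum_filter_add_sum_filter_not _ _ _
    have h3 : (∑ y : Fin m → X, ((n : ℝ))⁻¹ ^ m * (if ∀ i, y i ∈ S then (1 : ℝ) else 0)) = 1 := by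
      rw [← Finset.mul_sum, sumAll S, hcardS S hS, hinv1]
    have h4 : (∑ y ∈ (Finset.univ : Finset (Fin m → X)).filter (fun y => Function.Injective y),
        ((n : ℝ))⁻¹ ^ m * (if ∀ i, y i ∈ S then (1 : ℝ) else 0))
        = ((n : ℝ))⁻¹ ^ m * ((n.descFactorial m : ℕ) : ℝ) := by
      rw [← Finset.mul_sum, sumInj S, hcardS S hS]
    have h6 : 1 - ((n : ℝ))⁻¹ ^ m * ((n.descFactorial m : ℕ) : ℝ)
        ≤ (m : ℝ) * ((m : ℝ) - 1) / N := by
      have hpm : (0 : ℝ) < (n : ℝ) ^ m := pow_pos hnpos m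
      have h5 := birthdayNat n m hmn
      have hmul := mul_le_mul_of_nonneg_left h5 (le_of_lt (inv_pos.mpr hpm))
      have hL : ((n : ℝ) ^ m)⁻¹ * ((n : ℝ) ^ m - (n.descFactorial m : ℝ))
          = 1 - ((n : ℝ))⁻¹ ^ m * ((n.descFactorial m : ℕ) : ℝ) := by
        rw [mul_sub, inv_mul_cancel₀ (ne_of_gt hpm), inv_pow]
      have hR : ((n : ℝ) ^ m)⁻¹ * ((m : ℝ) * ((m : ℝ) - 1) / 2 * (n : ℝ) ^ (m - 1))
          = (m : ℝ) * ((m : ℝ) - 1) / N := by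
        have hmm : m - 1 + 1 = m := Nat.succ_pred_eq_of_pos hm1
        have hps : (n : ℝ) ^ m = (n : ℝ) ^ (m - 1) * n := by rw [← pow_succ, hmm]
        have hNr : (N : ℝ) = 2 * (n : ℝ) := by exact_mod_cast h2n.symm
        have hpm1 : ((n : ℝ)) ^ (m - 1) ≠ 0 := pow_ne_zero _ hnne
        rw [hps, hNr]
        field_simp
      rw [hL, hR] at hmul
      exact hmul
    exact h1.trans (by rw [h2, h3, h4]; exact h6)
  -- sum the non-injective bound over S
  have partNon : (∑ S ∈ P, (K : ℝ)⁻¹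
      * ∑ y ∈ (Finset.univ : Finset (Fin m → X)).filter (fun y => ¬ Function.Injective y),
          (((n : ℝ))⁻¹ ^ m * (if ∀ i, y i ∈ S then (1 : ℝ) else 0)) * A y)
      ≤ (m : ℝ) * ((m : ℝ) - 1) / N := by
    calc (∑ S ∈ P, (K : ℝ)⁻¹
        * ∑ y ∈ (Finset.univ : Finset (Fin m → X)).filter (fun y => ¬ Function.Injective y),
            (((n : ℝ))⁻¹ ^ m * (if ∀ i, y i ∈ S then (1 : ℝ) else 0)) * A y)
        ≤ ∑ S ∈ P, (K : ℝ)⁻¹ * ((m : ℝ) * ((m : ℝ) - 1) / N) := by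
          apply Finset.sum_le_sum
          intro S hS
          exact mul_le_mul_of_nonneg_left (hNonS S hS) (by positivity)
      _ = (m : ℝ) * ((m : ℝ) - 1) / N := by
          rw [Finset.sum_const, nsmul_eq_mul, ← hK, ← mul_assoc, mul_inv_cancel₀ hKne, one_mul]
  -- the RHS second term
  have hRHS2 : (∑ y : Fin m → X, (if Function.Injective y then D⁻¹ else 0) * A y)
      = ∑ y ∈ (Finset.univ : Finset (Fin m → X)).filter (fun y => Function.Injective y),
          D⁻¹ * A y := by
    rw [Finset.sum_filter]
    apply Finset.sum_congr rfl
    intro y _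
    rw [ite_mul, zero_mul]
  -- conclude
  calc (∑ S ∈ P, (K : ℝ)⁻¹
      * ∑ y : Fin m → X, (∏ i : Fin m, (if y i ∈ S then ((n : ℝ))⁻¹ else 0)) * A y)
      = (∑ S ∈ P, (K : ℝ)⁻¹
          * ∑ y ∈ (Finset.univ : Finset (Fin m → X)).filter (fun y => Function.Injective y),
            (((n : ℝ))⁻¹ ^ m * (if ∀ i, y i ∈ S then (1 : ℝ) else 0)) * A y)
        + (∑ S ∈ P, (K : ℝ)⁻¹
          * ∑ y ∈ (Finset.univ : Finset (Fin m → X)).filter (fun y => ¬ Function.Injective y),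
            (((n : ℝ))⁻¹ ^ m * (if ∀ i, y i ∈ S then (1 : ℝ) else 0)) * A y) := by
        rw [← Finset.sum_add_distrib]
        apply Finset.sum_congr rfl
        intro S hS
        rw [step0 S hS, mul_add]
    _ ≤ (∑ y ∈ (Finset.univ : Finset (Fin m → X)).filter (fun y => Function.Injective y),
            D⁻¹ * A y) + (m : ℝ) * ((m : ℝ) - 1) / N := by
        apply add_le_add
        · rw [partInj]
          apply Finset.sum_le_sum
          intro y _
          exact mul_le_mul_of_nonneg_right hc0le (hA y).1
        · exact partNon
    _ = (m : ℝ) * ((m : ℝ) - 1) / N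
        + ∑ y : Fin m → X, (if Function.Injective y then D⁻¹ else 0) * A y := by
        rw [hRHS2, add_comm]
end
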